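/- arXiv:1511.04925 — 6 statements merged into one kernel-verified Lean document; each statement's English description precedes it below -/
import Mathlib

section
/- Let μ ∈ [0,1) with αμ < 1, suppose ‖Q − u₁u₁ᵀ‖₂ ≤ μ. Then the PageRank vector satisfies ‖π − π̄‖₁ ≤ (1−α)·√n·√(d_max/d_min)·(αμ/(1−αμ))·‖v‖₂. -/
open Matrix Finset

/-- Spectral norm of a matrix: the operator norm induced by the Euclidean vector norm. -/
noncomputable def sNorm {n : ℕ} (M : Matrix (Fin n) (Fin n) ℝ) : ℝ :=
  ‖Matrix.toEuclideanCLM (𝕜 := ℝ) M‖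

/-- Euclidean norm of a vector. -/
noncomputable def vNorm2 {n : ℕ} (x : Fin n → ℝ) : ℝ :=
  Real.sqrt (∑ i, (x i) ^ 2)

lemma l1_le_sqrt_l2 {n : ℕ} (z : Fin n → ℝ) :
    ∑ i, |z i| ≤ Real.sqrt n * Real.sqrt (∑ i, z i ^ 2) := by
  have h1 : (∑ i, |z i|) ^ 2 ≤ (n : ℝ) * ∑ i, |z i| ^ 2 := by
    simpa using sq_sum_le_card_mul_sum_sq (s := (univ : Finset (Fin n))) (f := fun i => |z i|)
  have h2 : ∑ i, |z i| ^ 2 = ∑ i, z i ^ 2 := by simp [sq_abs]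
  have h3 : (0:ℝ) ≤ ∑ i, |z i| := sum_nonneg fun i _ => abs_nonneg _
  rw [h2] at h1
  have h4 := Real.sqrt_le_sqrt h1
  rwa [Real.sqrt_sq h3, Real.sqrt_mul (by positivity)] at h4

lemma mulVec_l2_le {n : ℕ} (M : Matrix (Fin n) (Fin n) ℝ) (x : Fin n → ℝ) :
    Real.sqrt (∑ i, (M *ᵥ x) i ^ 2) ≤ sNorm M * Real.sqrt (∑ i, x i ^ 2) := by
  have key := (Matrix.toEuclideanCLM (𝕜 := ℝ) M).le_opNorm ((WithLp.equiv 2 (Fin n → ℝ)).symm x)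
  have hx : ‖(WithLp.equiv 2 (Fin n → ℝ)).symm x‖ = Real.sqrt (∑ i, x i ^ 2) := by
    rw [EuclideanSpace.norm_eq]
    simp [Real.norm_eq_abs, sq_abs]
  have hMx : ‖Matrix.toEuclideanCLM (𝕜 := ℝ) M ((WithLp.equiv 2 (Fin n → ℝ)).symm x)‖
      = Real.sqrt (∑ i, (M *ᵥ x) i ^ 2) := by
    rw [WithLp.equiv_symm_apply, Matrix.toEuclideanCLM_toLp, EuclideanSpace.norm_eq]
    simp [Real.norm_eq_abs, sq_abs, Matrix.toLin'_apply]
  rw [hMx, hx] at key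
  exact key

lemma neumann {n : ℕ} [NeZero n] (E : Matrix (Fin n) (Fin n) ℝ) {α μ : ℝ}
    (hα : 0 < α) (hαμ : α * μ < 1) (hE : sNorm E ≤ μ) :
    ∃ M : Matrix (Fin n) (Fin n) ℝ, (1 - α • E) * M = 1 ∧
      sNorm (M - 1) ≤ α * μ / (1 - α * μ) := by
  haveI : Nontrivial (EuclideanSpace ℝ (Fin n)) := inferInstance
  set e := Matrix.toEuclideanCLM (𝕜 := ℝ) (n := Fin n) with he
  set T : EuclideanSpace ℝ (Fin n) →L[ℝ] EuclideanSpace ℝ (Fin n) := α • e E with hT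
  have hTnorm : ‖T‖ ≤ α * μ := by
    have h0 : ‖T‖ = ‖α‖ * ‖e E‖ := norm_smul α (e E)
    rw [h0, Real.norm_eq_abs, abs_of_pos hα]
    exact mul_le_mul_of_nonneg_left hE hα.le
  have ht : ‖T‖ < 1 := lt_of_le_of_lt hTnorm hαμ
  set u := Units.oneSub T ht with hu
  have huv : (↑u : EuclideanSpace ℝ (Fin n) →L[ℝ] EuclideanSpace ℝ (Fin n)) = 1 - T := rfl
  have h1E : (1 : Matrix (Fin n) (Fin n) ℝ) - α • E = e.symm ↑u := by
    rw [huv, _root_.map_sub, _root_.map_one, hT, _root_.map_smul,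
      StarAlgEquiv.symm_apply_apply]
  refine ⟨e.symm ↑u⁻¹, ?_, ?_⟩
  · rw [h1E, ← _root_.map_mul, u.mul_inv, _root_.map_one]
  · have hinv : (↑u⁻¹ : EuclideanSpace ℝ (Fin n) →L[ℝ] EuclideanSpace ℝ (Fin n)) - 1
        = ↑u⁻¹ * T := by
      have h := u.inv_mul
      rw [huv] at h
      rw [mul_sub, mul_one] at h
      rw [← h]; abel
    have hinorm : ‖(↑u⁻¹ : EuclideanSpace ℝ (Fin n) →L[ℝ] EuclideanSpace ℝ (Fin n))‖
        ≤ (1 - ‖T‖)⁻¹ := by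
      have hb := tsum_geometric_le_of_norm_lt_one T ht
      have hone : ‖(1 : EuclideanSpace ℝ (Fin n) →L[ℝ] EuclideanSpace ℝ (Fin n))‖ = 1 :=
        ContinuousLinearMap.norm_id
      have h2 : (↑u⁻¹ : EuclideanSpace ℝ (Fin n) →L[ℝ] EuclideanSpace ℝ (Fin n))
          = ∑' k : ℕ, T ^ k := rfl
      rw [h2]
      rw [hone] at hb
      linarith
    have hsn : sNorm (e.symm ↑u⁻¹ - 1) = ‖(↑u⁻¹ : EuclideanSpace ℝ (Fin n) →L[ℝ]
        EuclideanSpace ℝ (Fin n)) - 1‖ := by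
      unfold sNorm
      rw [← he, _root_.map_sub, _root_.map_one, StarAlgEquiv.apply_symm_apply]
    rw [hsn, hinv]
    have h1 : (0:ℝ) < 1 - ‖T‖ := by linarith
    have h2 : (0:ℝ) < 1 - α * μ := by linarith
    calc ‖(↑u⁻¹ : EuclideanSpace ℝ (Fin n) →L[ℝ] EuclideanSpace ℝ (Fin n)) * T‖
        ≤ ‖(↑u⁻¹ : EuclideanSpace ℝ (Fin n) →L[ℝ] EuclideanSpace ℝ (Fin n))‖ * ‖T‖ :=
          norm_mul_le _ _
      _ ≤ (1 - ‖T‖)⁻¹ * ‖T‖ := mul_le_mul_of_nonneg_right hinorm (norm_nonneg _)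
      _ ≤ α * μ / (1 - α * μ) := by
          rw [inv_mul_eq_div, div_le_div_iff₀ h1 h2]
          nlinarith [norm_nonneg T]

/-- if `‖Q − u₁u₁ᵀ‖₂ ≤ μ` with `μ ∈ [0,1)` and `αμ < 1`, then
`‖π − π̄‖₁ ≤ (1−α)·√n·√(d_max/d_min)·(αμ/(1−αμ))·‖v‖₂`. -/
theorem pagerank_l1_error_bound
    (n : ℕ) [NeZero n]
    (A : Matrix (Fin n) (Fin n) ℝ) (hAsymm : A.IsSymm) (hA0 : ∀ i j, 0 ≤ A i j)
    (d : Fin n → ℝ) (hd : ∀ i, d i = ∑ j, A i j) (hdpos : ∀ i, 0 < d i)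
    (α : ℝ) (hα : α ∈ Set.Ioo (0 : ℝ) 1)
    (v : Fin n → ℝ) (hv0 : ∀ i, 0 ≤ v i) (hv1 : ∑ i, v i = 1)
    (μ : ℝ) (hμ : μ ∈ Set.Ico (0 : ℝ) 1) (hαμ : α * μ < 1)
    (P : Matrix (Fin n) (Fin n) ℝ)
    (hP : P = A * Matrix.diagonal (fun i => (d i)⁻¹))
    (Q : Matrix (Fin n) (Fin n) ℝ)
    (hQ : Q = Matrix.diagonal (fun i => (Real.sqrt (d i))⁻¹) * A *
      Matrix.diagonal (fun i => (Real.sqrt (d i))⁻¹))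
    (u₁ : Fin n → ℝ)
    (hu₁ : u₁ = fun i => Real.sqrt (d i) / Real.sqrt (∑ j, d j))
    (hgap : sNorm (Q - Matrix.vecMulVec u₁ u₁) ≤ μ)
    (π : Fin n → ℝ) (hπ : π = (1 - α) • ((1 - α • P)⁻¹ *ᵥ v))
    (πbar : Fin n → ℝ)
    (hπbar : πbar = fun i => α * d i / (∑ j, d j) + (1 - α) * v i) :
    ∑ i, |π i - πbar i| ≤
      (1 - α) * Real.sqrt n *
        Real.sqrt (univ.sup' univ_nonempty d / univ.inf' univ_nonempty d) *
        (α * μ / (1 - α * μ)) * vNorm2 v := by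
  obtain ⟨hα0, hα1⟩ := hα
  obtain ⟨hμ0, hμ1⟩ := hμ
  set s : Fin n → ℝ := fun i => Real.sqrt (d i) with hs
  have spos : ∀ i, 0 < s i := fun i => Real.sqrt_pos.mpr (hdpos i)
  have hs2 : ∀ i, s i * s i = d i := fun i => Real.mul_self_sqrt (hdpos i).le
  set vol : ℝ := ∑ j, d j with hvol
  have hvolpos : 0 < vol := Finset.sum_pos (fun i _ => hdpos i) univ_nonempty
  set sv : ℝ := Real.sqrt vol with hsv
  have svpos : 0 < sv := Real.sqrt_pos.mpr hvolpos
  have hsv2 : sv * sv = vol := Real.mul_self_sqrt hvolpos.le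
  set Dh : Matrix (Fin n) (Fin n) ℝ := Matrix.diagonal s with hDh
  set Dih : Matrix (Fin n) (Fin n) ℝ := Matrix.diagonal (fun i => (s i)⁻¹) with hDih
  have hDhDih : Dh * Dih = 1 := by
    rw [hDh, hDih, Matrix.diagonal_mul_diagonal]
    have : (fun i => s i * (s i)⁻¹) = fun _ : Fin n => (1:ℝ) :=
      funext fun i => mul_inv_cancel₀ (spos i).ne'
    rw [this, Matrix.diagonal_one]
  have hDihDh : Dih * Dh = 1 := by
    rw [hDh, hDih, Matrix.diagonal_mul_diagonal]
    have : (fun i => (s i)⁻¹ * s i) = fun _ : Fin n => (1:ℝ) :=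
      funext fun i => inv_mul_cancel₀ (spos i).ne'
    rw [this, Matrix.diagonal_one]
  have hQik : ∀ i k, Q i k = (s i)⁻¹ * A i k * (s k)⁻¹ := by
    intro i k
    rw [hQ]
    rw [Matrix.mul_diagonal, Matrix.diagonal_mul]
  have hkey : Dh * Q * Dih = P := by
    ext i j
    rw [hP]
    rw [Matrix.mul_diagonal, hDh, Matrix.diagonal_mul, hQik, Matrix.mul_diagonal]
    have hdj : d j = s j * s j := (hs2 j).symm
    have hii : s i * (s i)⁻¹ = 1 := mul_inv_cancel₀ (spos i).ne'
    rw [hdj, mul_inv]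
    linear_combination (A i j * (s j)⁻¹ * (s j)⁻¹) * hii
  have hfactor : (1 : Matrix (Fin n) (Fin n) ℝ) - α • P = Dh * (1 - α • Q) * Dih := by
    rw [mul_sub, sub_mul, mul_one, mul_smul_comm, smul_mul_assoc, hDhDih, hkey]
  -- u₁ facts
  have hu1i : ∀ i, u₁ i = s i / sv := fun i => by rw [hu₁]
  set U : Matrix (Fin n) (Fin n) ℝ := Matrix.vecMulVec u₁ u₁ with hU
  have hQu : ∀ i, ∑ k, Q i k * u₁ k = u₁ i := by
    intro i
    have hterm : ∀ k, Q i k * u₁ k = (s i)⁻¹ * A i k / sv := by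
      intro k
      rw [hQik, hu1i]
      have hkk : (s k)⁻¹ * s k = 1 := inv_mul_cancel₀ (spos k).ne'
      linear_combination ((s i)⁻¹ * A i k * sv⁻¹) * hkk
    rw [Finset.sum_congr rfl fun k _ => hterm k]
    rw [← Finset.sum_div, ← Finset.mul_sum, ← hd i, hu1i]
    have : d i = s i * s i := (hs2 i).symm
    rw [this]
    have hii : (s i)⁻¹ * s i = 1 := inv_mul_cancel₀ (spos i).ne'
    linear_combination (s i / sv) * hii
  have hQsymm : Qᵀ = Q := by
    rw [hQ]
    rw [Matrix.transpose_mul, Matrix.transpose_mul, Matrix.diagonal_transpose, hAsymm.eq,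
      Matrix.mul_assoc]
  have hu1Q : ∀ j, ∑ k, u₁ k * Q k j = u₁ j := by
    intro j
    have : ∀ k, u₁ k * Q k j = Q j k * u₁ k := by
      intro k
      have : Q k j = Q j k := (congrFun (congrFun hQsymm k) j).symm
      rw [this, mul_comm]
    rw [Finset.sum_congr rfl fun k _ => this k]
    exact hQu j
  have hu1norm : ∑ k, u₁ k * u₁ k = 1 := by
    have : ∀ k, u₁ k * u₁ k = d k / vol := by
      intro k
      rw [hu1i]
      rw [div_mul_div_comm, hs2, hsv2]
    rw [Finset.sum_congr rfl fun k _ => this k, ← Finset.sum_div, ← hvol,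
      div_self hvolpos.ne']
  have hQU : Q * U = U := by
    ext i j
    rw [Matrix.mul_apply]
    simp only [hU, Matrix.vecMulVec_apply]
    rw [show ∑ k, Q i k * (u₁ k * u₁ j) = (∑ k, Q i k * u₁ k) * u₁ j by
      rw [Finset.sum_mul]; exact Finset.sum_congr rfl fun k _ => by ring]
    rw [hQu]
  have hUQ : U * Q = U := by
    ext i j
    rw [Matrix.mul_apply]
    simp only [hU, Matrix.vecMulVec_apply]
    rw [show ∑ k, u₁ i * u₁ k * Q k j = u₁ i * ∑ k, u₁ k * Q k j by
      rw [Finset.mul_sum]; exact Finset.sum_congr rfl fun k _ => by ring]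
    rw [hu1Q]
  have hUU : U * U = U := by
    ext i j
    rw [Matrix.mul_apply]
    simp only [hU, Matrix.vecMulVec_apply]
    rw [show ∑ k, u₁ i * u₁ k * (u₁ k * u₁ j) = (u₁ i * u₁ j) * ∑ k, u₁ k * u₁ k by
      rw [Finset.mul_sum]; exact Finset.sum_congr rfl fun k _ => by ring]
    rw [hu1norm, mul_one]
  -- Neumann series inverse
  set E : Matrix (Fin n) (Fin n) ℝ := Q - U with hE
  obtain ⟨M, hM, hMnorm⟩ := neumann E hα0 hαμ hgap
  have hEU : E * U = 0 := by rw [hE, Matrix.sub_mul, hQU, hUU, sub_self]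
  have hUE : U * E = 0 := by rw [hE, Matrix.mul_sub, hUQ, hUU, sub_self]
  have hM' : M = 1 + α • (E * M) := by
    have h := hM
    rw [Matrix.sub_mul, Matrix.one_mul, Matrix.smul_mul] at h
    rw [← h]; abel
  have hUM : U * M = U := by
    conv_lhs => rw [hM']
    rw [Matrix.mul_add, Matrix.mul_one, mul_smul_comm, ← Matrix.mul_assoc, hUE,
      Matrix.zero_mul, smul_zero, add_zero]
  set c : ℝ := α / (1 - α) with hc
  have hc0 : c - α - α * c = 0 := by
    have h1 : (1 - α) * (1 - α)⁻¹ = 1 := mul_inv_cancel₀ (by linarith)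
    rw [hc, div_eq_mul_inv]
    linear_combination α * h1
  set R : Matrix (Fin n) (Fin n) ℝ := M + c • U with hR
  have hQR : (1 - α • Q) * R = 1 := by
    have hQEU : Q = E + U := by rw [hE]; abel
    have expand : (1 - α • Q) * R = M - α • (E * M) + (c - α - α * c) • U := by
      rw [hQEU, hR, smul_add, Matrix.sub_mul, Matrix.one_mul, Matrix.add_mul,
        Matrix.smul_mul, Matrix.smul_mul, Matrix.mul_add, Matrix.mul_add,
        mul_smul_comm, mul_smul_comm, hEU, hUM, hUU]
      simp only [smul_zero]
      module
    rw [expand, hc0, zero_smul, add_zero]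
    have h := hM
    rw [Matrix.sub_mul, Matrix.one_mul, Matrix.smul_mul] at h
    exact h
  have hPS : (1 - α • P) * (Dh * R * Dih) = 1 := by
    rw [hfactor]
    calc (Dh * (1 - α • Q) * Dih) * (Dh * R * Dih)
        = Dh * ((1 - α • Q) * ((Dih * Dh) * (R * Dih))) := by
          simp only [Matrix.mul_assoc]
      _ = Dh * ((1 - α • Q) * R * Dih) := by
          rw [hDihDh, Matrix.one_mul, Matrix.mul_assoc]
      _ = Dh * Dih := by rw [hQR, Matrix.one_mul]
      _ = 1 := hDhDih
  have hinv : (1 - α • P)⁻¹ = Dh * R * Dih := Matrix.inv_eq_right_inv hPS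
  -- vector computations
  set w : Fin n → ℝ := fun i => (s i)⁻¹ * v i with hw
  have hDihv : Dih *ᵥ v = w := by
    funext i
    rw [hDih, Matrix.mulVec_diagonal]
  have hUw : U *ᵥ w = fun i => u₁ i / sv := by
    funext i
    rw [Matrix.mulVec, dotProduct]
    have hterm : ∀ k, U i k * w k = u₁ i * (v k / sv) := by
      intro k
      rw [hU, Matrix.vecMulVec_apply, hw, hu1i k]
      have hkk : s k * (s k)⁻¹ = 1 := mul_inv_cancel₀ (spos k).ne'
      linear_combination (u₁ i * v k * sv⁻¹) * hkk
    rw [Finset.sum_congr rfl fun k _ => hterm k, ← Finset.mul_sum, ← Finset.sum_div, hv1]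
    rw [mul_one_div]
  set y : Fin n → ℝ := (M - 1) *ᵥ w with hy
  have hMw : M *ᵥ w = fun i => y i + w i := by
    funext i
    rw [hy, Matrix.sub_mulVec, Matrix.one_mulVec]
    simp
  have hdiff : ∀ i, π i - πbar i = (1 - α) * (s i * y i) := by
    intro i
    have hSv : ((Dh * R * Dih) *ᵥ v) i = s i * ((M *ᵥ w) i + c * (u₁ i / sv)) := by
      rw [← Matrix.mulVec_mulVec, ← Matrix.mulVec_mulVec, hDihv]
      rw [hR, Matrix.add_mulVec, Matrix.smul_mulVec, hUw]
      rw [hDh, Matrix.mulVec_diagonal]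
      simp only [Pi.add_apply, Pi.smul_apply, smul_eq_mul]
    have hπi : π i = (1 - α) * (s i * ((M *ᵥ w) i + c * (u₁ i / sv))) := by
      rw [hπ, hinv]
      simp only [Pi.smul_apply, smul_eq_mul]
      rw [hSv]
    have hterm2 : (1 - α) * (s i * (c * (u₁ i / sv))) = α * d i / vol := by
      rw [hu1i, hc]
      have h1 : (1 - α) * (1 - α)⁻¹ = 1 := mul_inv_cancel₀ (by linarith : (1:ℝ) - α ≠ 0)
      have hdi : d i = s i * s i := (hs2 i).symm
      rw [hdi, ← hsv2, div_eq_mul_inv α]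
      linear_combination (α * s i * s i * sv⁻¹ * sv⁻¹) * h1
    have hsw : s i * w i = v i := by
      have hii : s i * (s i)⁻¹ = 1 := mul_inv_cancel₀ (spos i).ne'
      show s i * ((s i)⁻¹ * v i) = v i
      linear_combination (v i) * hii
    rw [hπi, hπbar, hMw]
    simp only
    have : (1 - α) * (s i * (y i + w i + c * (u₁ i / sv)))
        = (1 - α) * (s i * y i) + (1 - α) * (s i * w i)
          + (1 - α) * (s i * (c * (u₁ i / sv))) := by ring
    rw [this, hterm2, hsw]
    ring
  -- final estimates
  set dmax : ℝ := univ.sup' univ_nonempty d with hdmax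
  set dmin : ℝ := univ.inf' univ_nonempty d with hdmin
  have hdmaxpos : 0 < dmax := by
    obtain ⟨i⟩ := (inferInstance : Nonempty (Fin n))
    exact lt_of_lt_of_le (hdpos i) (le_sup' d (mem_univ i))
  have hdminpos : 0 < dmin := by
    obtain ⟨i, _, hi⟩ := exists_mem_eq_inf' univ_nonempty d
    rw [hdmin, hi]; exact hdpos i
  set K : ℝ := α * μ / (1 - α * μ) with hK
  have hK0 : 0 ≤ K := by
    apply div_nonneg (by positivity) (by linarith)
  have h2 : ∑ i, (s i * y i) ^ 2 ≤ dmax * ∑ i, y i ^ 2 := by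
    rw [Finset.mul_sum]
    apply Finset.sum_le_sum
    intro i _
    have : (s i * y i) ^ 2 = d i * y i ^ 2 := by
      rw [mul_pow, sq, hs2]
    rw [this]
    exact mul_le_mul_of_nonneg_right (le_sup' d (mem_univ i)) (sq_nonneg _)
  have h3 : Real.sqrt (∑ i, y i ^ 2) ≤ sNorm (M - 1) * Real.sqrt (∑ i, w i ^ 2) := by
    rw [hy]; exact mulVec_l2_le (M - 1) w
  have h5 : ∑ i, w i ^ 2 ≤ dmin⁻¹ * ∑ i, v i ^ 2 := by
    rw [Finset.mul_sum]
    apply Finset.sum_le_sum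
    intro i _
    have hwv : w i ^ 2 = v i ^ 2 * (d i)⁻¹ := by
      show ((s i)⁻¹ * v i) ^ 2 = v i ^ 2 * (d i)⁻¹
      rw [← hs2 i, mul_inv]
      ring
    rw [hwv, mul_comm (dmin⁻¹)]
    apply mul_le_mul_of_nonneg_left _ (sq_nonneg _)
    exact inv_anti₀ hdminpos (inf'_le d (mem_univ i))
  have hsum : ∑ i, |π i - πbar i| = (1 - α) * ∑ i, |s i * y i| := by
    rw [Finset.mul_sum]
    exact Finset.sum_congr rfl fun i _ => by
      rw [hdiff i, abs_mul, abs_of_nonneg (by linarith : (0:ℝ) ≤ 1 - α)]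
  have hvn : vNorm2 v = Real.sqrt (∑ i, v i ^ 2) := rfl
  have step2 : Real.sqrt (∑ i, (s i * y i) ^ 2)
      ≤ Real.sqrt dmax * (K * (Real.sqrt dmin⁻¹ * vNorm2 v)) := by
    calc Real.sqrt (∑ i, (s i * y i) ^ 2)
        ≤ Real.sqrt (dmax * ∑ i, y i ^ 2) := Real.sqrt_le_sqrt h2
      _ = Real.sqrt dmax * Real.sqrt (∑ i, y i ^ 2) := Real.sqrt_mul hdmaxpos.le _
      _ ≤ Real.sqrt dmax * (sNorm (M - 1) * Real.sqrt (∑ i, w i ^ 2)) :=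
          mul_le_mul_of_nonneg_left h3 (Real.sqrt_nonneg _)
      _ ≤ Real.sqrt dmax * (K * Real.sqrt (dmin⁻¹ * ∑ i, v i ^ 2)) := by
          apply mul_le_mul_of_nonneg_left _ (Real.sqrt_nonneg _)
          exact mul_le_mul hMnorm (Real.sqrt_le_sqrt h5) (Real.sqrt_nonneg _) hK0
      _ = Real.sqrt dmax * (K * (Real.sqrt dmin⁻¹ * vNorm2 v)) := by
          rw [Real.sqrt_mul (by positivity) , hvn]
  calc ∑ i, |π i - πbar i| = (1 - α) * ∑ i, |s i * y i| := hsum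
    _ ≤ (1 - α) * (Real.sqrt n * (Real.sqrt dmax * (K * (Real.sqrt dmin⁻¹ * vNorm2 v)))) := by
        apply mul_le_mul_of_nonneg_left _ (by linarith : (0:ℝ) ≤ 1 - α)
        calc ∑ i, |s i * y i|
            ≤ Real.sqrt n * Real.sqrt (∑ i, (s i * y i) ^ 2) := l1_le_sqrt_l2 _
          _ ≤ Real.sqrt n * (Real.sqrt dmax * (K * (Real.sqrt dmin⁻¹ * vNorm2 v))) :=
              mul_le_mul_of_nonneg_left step2 (Real.sqrt_nonneg _)
    _ = (1 - α) * Real.sqrt n * Real.sqrt (dmax / dmin) * K * vNorm2 v := by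
        rw [div_eq_mul_inv, Real.sqrt_mul hdmaxpos.le]
        ring
end

section
/- Let K, C > 0 and μ ∈ [0,1) with αμ < 1. Suppose d_max/d_min ≤ K, ‖Q − u₁u₁ᵀ‖₂ ≤ μ, and ‖v‖₂ ≤ C/√n. Then the total variation distance between PageRank and its degree-based approximation satisfies d_TV(π, π̄) = (1/2)‖π − π̄‖₁ ≤ (1/2)·(1−α)·C·√K·(αμ/(1−αμ)). -/
open Matrix Finset

set_option synthInstance.maxHeartbeats 1000000
set_option maxHeartbeats 1000000

section aux
variable {n : ℕ}

lemma vNorm2_eq (x : Fin n → ℝ) :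
    vNorm2 x = ‖(WithLp.equiv 2 (Fin n → ℝ)).symm x‖ := by
  rw [vNorm2, EuclideanSpace.norm_eq]
  congr 1
  apply Finset.sum_congr rfl
  intro i _
  rw [show ((WithLp.equiv 2 (Fin n → ℝ)).symm x).ofLp i = x i from rfl, Real.norm_eq_abs, sq_abs]

lemma vNorm2_nonneg (x : Fin n → ℝ) : 0 ≤ vNorm2 x := Real.sqrt_nonneg _

lemma sNorm_nonneg (M : Matrix (Fin n) (Fin n) ℝ) : 0 ≤ sNorm M := norm_nonneg _

lemma mulVec_vNorm2_le (M : Matrix (Fin n) (Fin n) ℝ) (x : Fin n → ℝ) :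
    vNorm2 (M *ᵥ x) ≤ sNorm M * vNorm2 x := by
  rw [vNorm2_eq, vNorm2_eq, ← Matrix.toLin'_apply,
    show (WithLp.equiv 2 (Fin n → ℝ)).symm (Matrix.toLin' M x) = Matrix.toEuclideanCLM (𝕜 := ℝ) M ((WithLp.equiv 2 (Fin n → ℝ)).symm x) from rfl]
  exact ContinuousLinearMap.le_opNorm _ _

lemma vNorm2_smul (a : ℝ) (x : Fin n → ℝ) : vNorm2 (a • x) = |a| * vNorm2 x := by
  rw [vNorm2_eq, vNorm2_eq, ← Real.norm_eq_abs, ← norm_smul]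
  congr 1

lemma sNorm_mul_le (M N : Matrix (Fin n) (Fin n) ℝ) :
    sNorm (M * N) ≤ sNorm M * sNorm N := by
  rw [sNorm, sNorm, sNorm, _root_.map_mul]; exact norm_mul_le _ _

lemma sNorm_smul (a : ℝ) (M : Matrix (Fin n) (Fin n) ℝ) :
    sNorm (a • M) = |a| * sNorm M := by
  rw [sNorm, sNorm, _root_.map_smul]
  exact (norm_smul a (Matrix.toEuclideanCLM (𝕜 := ℝ) M)).trans (by rw [Real.norm_eq_abs])

lemma sNorm_diagonal_le (w : Fin n → ℝ) (c : ℝ) (hc : 0 ≤ c) (h : ∀ i, |w i| ≤ c) :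
    sNorm (Matrix.diagonal w) ≤ c := by
  apply ContinuousLinearMap.opNorm_le_bound _ hc
  intro ξ
  have hξ : ξ = (WithLp.equiv 2 (Fin n → ℝ)).symm (WithLp.equiv 2 (Fin n → ℝ) ξ) :=
    ((WithLp.equiv 2 (Fin n → ℝ)).symm_apply_apply ξ).symm
  set x : Fin n → ℝ := WithLp.equiv 2 (Fin n → ℝ) ξ with hx
  rw [hξ, show Matrix.toEuclideanCLM (𝕜 := ℝ) (Matrix.diagonal w) ((WithLp.equiv 2 (Fin n → ℝ)).symm x) = (WithLp.equiv 2 (Fin n → ℝ)).symm (Matrix.toLin' (Matrix.diagonal w) x) from rfl, ← vNorm2_eq, ← vNorm2_eq,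
    Matrix.toLin'_apply]
  have h1 : vNorm2 (Matrix.diagonal w *ᵥ x) ≤ c * vNorm2 x := by
    rw [vNorm2, vNorm2, ← Real.sqrt_sq hc, ← Real.sqrt_mul (sq_nonneg c)]
    apply Real.sqrt_le_sqrt
    rw [Finset.mul_sum]
    apply Finset.sum_le_sum
    intro i _
    rw [Matrix.mulVec_diagonal, mul_pow]
    have : (w i) ^ 2 ≤ c ^ 2 := by
      rw [← sq_abs (w i)]; exact pow_le_pow_left₀ (abs_nonneg _) (h i) 2
    nlinarith [sq_nonneg (x i)]
  exact h1

lemma sum_abs_le_sqrt_card_mul (y : Fin n → ℝ) :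
    ∑ i, |y i| ≤ Real.sqrt n * vNorm2 y := by
  have h1 : (∑ i, |y i|) ^ 2 ≤ (n : ℝ) * ∑ i, (y i) ^ 2 := by
    have := sq_sum_le_card_mul_sum_sq (s := (univ : Finset (Fin n))) (f := fun i => |y i|)
    simpa [sq_abs] using this
  have h2 : ∑ i, |y i| = Real.sqrt ((∑ i, |y i|) ^ 2) :=
    (Real.sqrt_sq (Finset.sum_nonneg fun i _ => abs_nonneg _)).symm
  rw [h2, vNorm2, ← Real.sqrt_mul (Nat.cast_nonneg n)]
  exact Real.sqrt_le_sqrt h1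

end aux


/-- if `d_max/d_min ≤ K`, `‖Q − u₁u₁ᵀ‖₂ ≤ μ` and `‖v‖₂ ≤ C/√n` then
`d_TV(π, π̄) = (1/2)‖π − π̄‖₁ ≤ (1/2)·(1−α)·C·√K·(αμ/(1−αμ))`. -/
theorem pagerank_tv_error_bound
    (n : ℕ) [NeZero n]
    (A : Matrix (Fin n) (Fin n) ℝ) (hAsymm : A.IsSymm) (hA0 : ∀ i j, 0 ≤ A i j)
    (d : Fin n → ℝ) (hd : ∀ i, d i = ∑ j, A i j) (hdpos : ∀ i, 0 < d i)
    (α : ℝ) (hα : α ∈ Set.Ioo (0 : ℝ) 1)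
    (v : Fin n → ℝ) (hv0 : ∀ i, 0 ≤ v i) (hv1 : ∑ i, v i = 1)
    (K C : ℝ) (hK : 0 < K) (hC : 0 < C)
    (μ : ℝ) (hμ : μ ∈ Set.Ico (0 : ℝ) 1) (hαμ : α * μ < 1)
    (hdeg : univ.sup' univ_nonempty d / univ.inf' univ_nonempty d ≤ K)
    (P : Matrix (Fin n) (Fin n) ℝ)
    (hP : P = A * Matrix.diagonal (fun i => (d i)⁻¹))
    (Q : Matrix (Fin n) (Fin n) ℝ)
    (hQ : Q = Matrix.diagonal (fun i => (Real.sqrt (d i))⁻¹) * A *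
      Matrix.diagonal (fun i => (Real.sqrt (d i))⁻¹))
    (u₁ : Fin n → ℝ)
    (hu₁ : u₁ = fun i => Real.sqrt (d i) / Real.sqrt (∑ j, d j))
    (hgap : sNorm (Q - Matrix.vecMulVec u₁ u₁) ≤ μ)
    (hv2 : vNorm2 v ≤ C / Real.sqrt n)
    (π : Fin n → ℝ) (hπ : π = (1 - α) • ((1 - α • P)⁻¹ *ᵥ v))
    (πbar : Fin n → ℝ)
    (hπbar : πbar = fun i => α * d i / (∑ j, d j) + (1 - α) * v i) :
    (1 / 2) * ∑ i, |π i - πbar i| ≤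
      (1 / 2) * (1 - α) * C * Real.sqrt K * (α * μ / (1 - α * μ)) := by
  obtain ⟨hα0, hα1⟩ := hα
  obtain ⟨hμ0, hμ1⟩ := hμ
  set vol := ∑ j, d j with hvol
  have hvolpos : 0 < vol := Finset.sum_pos (fun i _ => hdpos i) univ_nonempty
  have hspos : ∀ i, 0 < Real.sqrt (d i) := fun i => Real.sqrt_pos.mpr (hdpos i)
  have hss : ∀ i, Real.sqrt (d i) * Real.sqrt (d i) = d i :=
    fun i => Real.mul_self_sqrt (hdpos i).le
  have hvv : Real.sqrt vol * Real.sqrt vol = vol := Real.mul_self_sqrt hvolpos.le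
  have hvolspos : 0 < Real.sqrt vol := Real.sqrt_pos.mpr hvolpos
  set S : Matrix (Fin n) (Fin n) ℝ := Matrix.diagonal (fun i => Real.sqrt (d i)) with hS
  set S' : Matrix (Fin n) (Fin n) ℝ :=
    Matrix.diagonal (fun i => (Real.sqrt (d i))⁻¹) with hS'
  have hSS' : S * S' = 1 := by
    rw [hS, hS', Matrix.diagonal_mul_diagonal]
    have h9 : (fun i => Real.sqrt (d i) * (Real.sqrt (d i))⁻¹) = fun _ => (1:ℝ) :=
      funext fun i => mul_inv_cancel₀ (hspos i).ne'
    rw [h9, Matrix.diagonal_one]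
  have hS'S : S' * S = 1 := by
    rw [hS, hS', Matrix.diagonal_mul_diagonal]
    have h9 : (fun i => (Real.sqrt (d i))⁻¹ * Real.sqrt (d i)) = fun _ => (1:ℝ) :=
      funext fun i => inv_mul_cancel₀ (hspos i).ne'
    rw [h9, Matrix.diagonal_one]
  have hQsym : Qᵀ = Q := by
    rw [hQ, Matrix.transpose_mul, Matrix.transpose_mul, Matrix.diagonal_transpose,
      hAsymm.eq, ← Matrix.mul_assoc]
  have hQij : ∀ i j, Q i j = (Real.sqrt (d i))⁻¹ * A i j * (Real.sqrt (d j))⁻¹ := by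
    intro i j
    rw [hQ]
    rw [Matrix.mul_diagonal, Matrix.diagonal_mul]
  set N := Matrix.vecMulVec u₁ u₁ with hN
  set R := Q - N with hR
  -- eigenvector facts
  have hQu : Q *ᵥ u₁ = u₁ := by
    funext i
    have : ∀ j, Q i j * u₁ j = A i j * ((Real.sqrt (d i))⁻¹ / Real.sqrt vol) := by
      intro j
      rw [hQij, hu₁]
      have hj := (hspos j).ne'
      field_simp
    calc (Q *ᵥ u₁) i = ∑ j, Q i j * u₁ j := rfl
      _ = ∑ j, A i j * ((Real.sqrt (d i))⁻¹ / Real.sqrt vol) := by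
          exact Finset.sum_congr rfl fun j _ => this j
      _ = (∑ j, A i j) * ((Real.sqrt (d i))⁻¹ / Real.sqrt vol) := by
          rw [← Finset.sum_mul]
      _ = u₁ i := by
          rw [← hd i, hu₁]
          show d i * ((Real.sqrt (d i))⁻¹ / Real.sqrt vol) = Real.sqrt (d i) / Real.sqrt vol
          rw [← mul_div_assoc]
          congr 1
          field_simp
          rw [div_eq_iff (hspos i).ne', hss]
  have huu : ∑ k, u₁ k * u₁ k = 1 := by
    rw [hu₁]
    have : ∀ k, (Real.sqrt (d k) / Real.sqrt vol) * (Real.sqrt (d k) / Real.sqrt vol)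
        = d k / vol := by
      intro k
      rw [div_mul_div_comm, hss, hvv]
    simp only [this]
    rw [← Finset.sum_div, ← hvol, div_self hvolpos.ne']
  have hQN : Q * N = N := by
    ext i j
    have : ∀ k, Q i k * (u₁ k * u₁ j) = (Q i k * u₁ k) * u₁ j := fun k => by ring
    calc (Q * N) i j = ∑ k, Q i k * (u₁ k * u₁ j) := by
          simp [Matrix.mul_apply, hN, Matrix.vecMulVec_apply]
      _ = (∑ k, Q i k * u₁ k) * u₁ j := by rw [Finset.sum_mul]; exact Finset.sum_congr rfl fun k _ => this k
      _ = u₁ i * u₁ j := by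
          have : (∑ k, Q i k * u₁ k) = (Q *ᵥ u₁) i := rfl
          rw [this, hQu]
      _ = N i j := by simp [hN, Matrix.vecMulVec_apply]
  have hNQ : N * Q = N := by
    ext i j
    have hQs : ∀ k, Q k j = Q j k := fun k => by
      conv_lhs => rw [← hQsym, Matrix.transpose_apply]
    calc (N * Q) i j = ∑ k, (u₁ i * u₁ k) * Q k j := by
          simp [Matrix.mul_apply, hN, Matrix.vecMulVec_apply]
      _ = u₁ i * ∑ k, Q j k * u₁ k := by
          rw [Finset.mul_sum]
          exact Finset.sum_congr rfl fun k _ => by rw [hQs k]; ring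
      _ = u₁ i * u₁ j := by
          have : (∑ k, Q j k * u₁ k) = (Q *ᵥ u₁) j := rfl
          rw [this, hQu]
      _ = N i j := by simp [hN, Matrix.vecMulVec_apply]
  have hNN : N * N = N := by
    ext i j
    calc (N * N) i j = ∑ k, (u₁ i * u₁ k) * (u₁ k * u₁ j) := by
          simp [Matrix.mul_apply, hN, Matrix.vecMulVec_apply]
      _ = (u₁ i * u₁ j) * ∑ k, u₁ k * u₁ k := by
          rw [Finset.mul_sum]
          exact Finset.sum_congr rfl fun k _ => by ring
      _ = N i j := by rw [huu, mul_one]; simp [hN, Matrix.vecMulVec_apply]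
  have hRN : R * N = 0 := by rw [hR, Matrix.sub_mul, hQN, hNN, sub_self]
  have hNR : N * R = 0 := by rw [hR, Matrix.mul_sub, hNQ, hNN, sub_self]
  -- invertibility of 1 - α • R
  have hRnorm : sNorm R ≤ μ := hgap
  have hαRnorm : sNorm (α • R) ≤ α * μ := by
    rw [sNorm_smul, abs_of_pos hα0]
    exact mul_le_mul_of_nonneg_left hRnorm hα0.le
  have hTlt : ‖Matrix.toEuclideanCLM (𝕜 := ℝ) (α • R)‖ < 1 :=
    lt_of_le_of_lt hαRnorm hαμ
  have hunitCLM : IsUnit ((1 : EuclideanSpace ℝ (Fin n) →L[ℝ] EuclideanSpace ℝ (Fin n))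
      - Matrix.toEuclideanCLM (𝕜 := ℝ) (α • R)) :=
    isUnit_one_sub_of_norm_lt_one hTlt
  have hunitM : IsUnit ((1 : Matrix (Fin n) (Fin n) ℝ) - α • R) := by
    obtain ⟨u, hu⟩ := hunitCLM
    have h1 : ((1 : Matrix (Fin n) (Fin n) ℝ) - α • R)
        = (Matrix.toEuclideanCLM (𝕜 := ℝ)).symm ↑u := by
      rw [hu, map_sub, _root_.map_one, StarAlgEquiv.symm_apply_apply]
    refine isUnit_iff_exists.mpr ⟨(Matrix.toEuclideanCLM (𝕜 := ℝ)).symm ↑u⁻¹, ?_, ?_⟩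
    · rw [h1, ← _root_.map_mul, u.mul_inv, _root_.map_one]
    · rw [h1, ← _root_.map_mul, u.inv_mul, _root_.map_one]
  have hdet : IsUnit ((1 : Matrix (Fin n) (Fin n) ℝ) - α • R).det :=
    (Matrix.isUnit_iff_isUnit_det _).mp hunitM
  set W := ((1 : Matrix (Fin n) (Fin n) ℝ) - α • R)⁻¹ with hWdef
  have hW1 : W * (1 - α • R) = 1 := Matrix.nonsing_inv_mul _ hdet
  have hW2 : ((1 : Matrix (Fin n) (Fin n) ℝ) - α • R) * W = 1 := Matrix.mul_nonsing_inv _ hdet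
  have hWclm : Matrix.toEuclideanCLM (𝕜 := ℝ) W
      = ∑' i : ℕ, (Matrix.toEuclideanCLM (𝕜 := ℝ) (α • R)) ^ i := by
    set T := Matrix.toEuclideanCLM (𝕜 := ℝ) (α • R) with hT
    have h2 : (1 - T) * ∑' i : ℕ, T ^ i = 1 := mul_neg_geom_series T hTlt
    have h1 : (Matrix.toEuclideanCLM (𝕜 := ℝ) W) * (1 - T) = 1 := by
      have h0 := congrArg (Matrix.toEuclideanCLM (𝕜 := ℝ)) hW1
      rwa [_root_.map_mul, map_sub, _root_.map_one] at h0
    calc Matrix.toEuclideanCLM (𝕜 := ℝ) W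
        = Matrix.toEuclideanCLM (𝕜 := ℝ) W * ((1 - T) * ∑' i : ℕ, T ^ i) := by
          rw [h2, mul_one]
      _ = (Matrix.toEuclideanCLM (𝕜 := ℝ) W * (1 - T)) * ∑' i : ℕ, T ^ i := by
          rw [mul_assoc]
      _ = ∑' i : ℕ, T ^ i := by rw [h1, one_mul]
  have hWnorm : sNorm W ≤ (1 - α * μ)⁻¹ := by
    haveI : Nontrivial (EuclideanSpace ℝ (Fin n)) := (WithLp.equiv 2 (Fin n → ℝ)).nontrivial
    rw [sNorm, hWclm]
    have hb := tsum_geometric_le_of_norm_lt_one _ hTlt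
    have hone : ‖(1 : EuclideanSpace ℝ (Fin n) →L[ℝ] EuclideanSpace ℝ (Fin n))‖ = 1 :=
      norm_one
    rw [hone] at hb
    have h3 : (1 - ‖Matrix.toEuclideanCLM (𝕜 := ℝ) (α • R)‖)⁻¹ ≤ (1 - α * μ)⁻¹ := by
      have hx : (0:ℝ) < 1 - α * μ := by linarith
      have hy : 1 - α * μ ≤ 1 - ‖Matrix.toEuclideanCLM (𝕜 := ℝ) (α • R)‖ := by
        have : ‖Matrix.toEuclideanCLM (𝕜 := ℝ) (α • R)‖ ≤ α * μ := hαRnorm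
        linarith
      exact inv_anti₀ hx hy
    calc ‖∑' i : ℕ, (Matrix.toEuclideanCLM (𝕜 := ℝ) (α • R)) ^ i‖
        ≤ 1 - 1 + (1 - ‖Matrix.toEuclideanCLM (𝕜 := ℝ) (α • R)‖)⁻¹ := hb
      _ = (1 - ‖Matrix.toEuclideanCLM (𝕜 := ℝ) (α • R)‖)⁻¹ := by ring
      _ ≤ (1 - α * μ)⁻¹ := h3
  -- algebraic identities
  set c := α / (1 - α) with hc
  have h1mα : (0:ℝ) < 1 - α := by linarith
  have hc1 : c * (1 - α) = α := div_mul_cancel₀ α h1mα.ne'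
  have hNW : N * W = N := by
    have h1 : N * ((1 : Matrix (Fin n) (Fin n) ℝ) - α • R) = N := by
      rw [Matrix.mul_sub, Matrix.mul_one, Matrix.mul_smul, hNR, smul_zero, sub_zero]
    calc N * W = (N * (1 - α • R)) * W := by rw [h1]
      _ = N * ((1 - α • R) * W) := by rw [Matrix.mul_assoc]
      _ = N := by rw [hW2, Matrix.mul_one]
  have hWeq : W = 1 + α • (R * W) := by
    have h0 := hW2
    rw [Matrix.sub_mul, Matrix.one_mul, Matrix.smul_mul] at h0
    exact eq_add_of_sub_eq h0
  set X := W + c • N with hX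
  have hsplit : (1 : Matrix (Fin n) (Fin n) ℝ) - α • Q = (1 - α • R) - α • N := by
    have : α • Q = α • R + α • N := by rw [hR, smul_sub, sub_add_cancel]
    rw [this]; abel
  have hXinv : ((1 : Matrix (Fin n) (Fin n) ℝ) - α • Q) * X = 1 := by
    have h3 : ((1 : Matrix (Fin n) (Fin n) ℝ) - α • R) * N = N := by
      rw [Matrix.sub_mul, Matrix.one_mul, Matrix.smul_mul, hRN, smul_zero, sub_zero]
    have expand : ((1 : Matrix (Fin n) (Fin n) ℝ) - α • Q) * X
        = 1 + c • N - (α • N + (c * α) • N) := by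
      rw [hsplit, hX, Matrix.sub_mul, Matrix.mul_add, Matrix.mul_add, hW2,
        Matrix.mul_smul, Matrix.mul_smul, Matrix.smul_mul, Matrix.smul_mul,
        hNW, hNN, h3, smul_smul]
    rw [expand]
    have h4 : c • N = α • N + (c * α) • N := by
      rw [← add_smul]
      congr 1
      have h5 : c * (1 - α) = α := hc1
      nlinarith [h5]
    rw [h4]; abel
  -- matrix inverse formula
  have hS'S' : S' * S' = Matrix.diagonal (fun i => (d i)⁻¹) := by
    rw [hS', Matrix.diagonal_mul_diagonal]
    have h9 : (fun i => (Real.sqrt (d i))⁻¹ * (Real.sqrt (d i))⁻¹) = fun i => (d i)⁻¹ := by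
      funext i
      rw [← mul_inv, hss]
    rw [h9]
  have hPe : P = S * Q * S' := by
    rw [hP, hQ]
    calc A * Matrix.diagonal (fun i => (d i)⁻¹) = A * (S' * S') := by rw [hS'S']
      _ = (1 : Matrix (Fin n) (Fin n) ℝ) * (A * (S' * S')) := by rw [Matrix.one_mul]
      _ = (S * S') * (A * (S' * S')) := by rw [hSS']
      _ = S * (S' * A * S') * S' := by simp only [Matrix.mul_assoc]
  have h1mP : (1 : Matrix (Fin n) (Fin n) ℝ) - α • P = S * (1 - α • Q) * S' := by
    have : S * ((1 : Matrix (Fin n) (Fin n) ℝ) - α • Q) * S'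
        = S * S' - α • (S * Q * S') := by
      rw [Matrix.mul_sub, Matrix.mul_one, Matrix.mul_smul, Matrix.sub_mul, Matrix.smul_mul]
    rw [this, hSS', ← hPe]
  have hInv : ((1 : Matrix (Fin n) (Fin n) ℝ) - α • P)⁻¹ = S * X * S' := by
    apply Matrix.inv_eq_right_inv
    rw [h1mP]
    calc S * (1 - α • Q) * S' * (S * X * S')
        = S * (1 - α • Q) * (S' * S) * (X * S') := by simp only [Matrix.mul_assoc]
      _ = S * (1 - α • Q) * (X * S') := by rw [hS'S, Matrix.mul_one]
      _ = S * ((1 - α • Q) * X) * S' := by simp only [Matrix.mul_assoc]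
      _ = S * S' := by rw [hXinv, Matrix.mul_one]
      _ = 1 := hSS'
  -- vector computations
  set z := S' *ᵥ v with hz
  set B := S *ᵥ ((R * W) *ᵥ z) with hB
  have hSz : S *ᵥ z = v := by
    rw [hz, Matrix.mulVec_mulVec, hSS', Matrix.one_mulVec]
  have hNz : N *ᵥ z = fun i => u₁ i * (Real.sqrt vol)⁻¹ := by
    funext i
    have hterm : ∀ j, u₁ j * z j = v j * (Real.sqrt vol)⁻¹ := by
      intro j
      have hzj : z j = (Real.sqrt (d j))⁻¹ * v j := by
        rw [hz, hS', Matrix.mulVec_diagonal]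
      rw [hzj, hu₁]
      show (Real.sqrt (d j) / Real.sqrt vol) * ((Real.sqrt (d j))⁻¹ * v j)
          = v j * (Real.sqrt vol)⁻¹
      field_simp [(hspos j).ne', hvolspos.ne']
    calc (N *ᵥ z) i = ∑ j, (u₁ i * u₁ j) * z j := by
          simp [hN, Matrix.mulVec, dotProduct, Matrix.vecMulVec_apply]
      _ = u₁ i * ∑ j, u₁ j * z j := by
          rw [Finset.mul_sum]
          exact Finset.sum_congr rfl fun j _ => by ring
      _ = u₁ i * ∑ j, v j * (Real.sqrt vol)⁻¹ := by
          congr 1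
          exact Finset.sum_congr rfl fun j _ => hterm j
      _ = u₁ i * (Real.sqrt vol)⁻¹ := by rw [← Finset.sum_mul, hv1, one_mul]
  have hSNz : S *ᵥ (N *ᵥ z) = fun i => d i / vol := by
    funext i
    rw [hNz]
    show (S *ᵥ fun k => u₁ k * (Real.sqrt vol)⁻¹) i = d i / vol
    rw [hS, Matrix.mulVec_diagonal, hu₁]
    calc Real.sqrt (d i) * ((Real.sqrt (d i) / Real.sqrt vol) * (Real.sqrt vol)⁻¹)
        = (Real.sqrt (d i) * Real.sqrt (d i)) * ((Real.sqrt vol * Real.sqrt vol)⁻¹) := by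
          rw [div_eq_mul_inv, mul_inv]; ring
      _ = d i / vol := by rw [hss, hvv, div_eq_mul_inv]
  have hXz : X *ᵥ z = z + α • ((R * W) *ᵥ z) + c • (N *ᵥ z) := by
    rw [hX, Matrix.add_mulVec, Matrix.smul_mulVec]
    congr 1
    conv_lhs => rw [hWeq]
    rw [Matrix.add_mulVec, Matrix.one_mulVec, Matrix.smul_mulVec]
  have hπv : π = (1 - α) • v + ((1 - α) * α) • B + ((1 - α) * c) • (fun i => d i / vol) := by
    rw [hπ, hInv, ← Matrix.mulVec_mulVec (v := v) (M := S * X) (N := S'),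
      ← Matrix.mulVec_mulVec (v := S' *ᵥ v) (M := S) (N := X), ← hz, hXz]
    rw [Matrix.mulVec_add, Matrix.mulVec_add, Matrix.mulVec_smul, Matrix.mulVec_smul,
      hSz, hSNz, ← hB]
    rw [smul_add, smul_add, smul_smul, smul_smul]
  have hkey : ∀ i, π i - πbar i = ((1 - α) * α) * B i := by
    intro i
    have h7 : (1 - α) * c = α := by rw [hc]; field_simp
    rw [hπv, hπbar, h7]
    simp only [Pi.add_apply, Pi.smul_apply, smul_eq_mul]
    ring
  -- norm bounds
  set dmax := univ.sup' univ_nonempty d with hdmax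
  set dmin := univ.inf' univ_nonempty d with hdmin
  have hdminpos : 0 < dmin := by
    obtain ⟨i, _, hi⟩ := Finset.exists_mem_eq_inf' univ_nonempty d
    rw [hdmin, hi]
    exact hdpos i
  have hdmaxpos : 0 < dmax := by
    have i0 : Fin n := ⟨0, Nat.pos_of_ne_zero (NeZero.ne n)⟩
    exact lt_of_lt_of_le (hdpos i0) (Finset.le_sup' d (Finset.mem_univ i0))
  have hsmin : 0 < Real.sqrt dmin := Real.sqrt_pos.mpr hdminpos
  have hSnorm : sNorm S ≤ Real.sqrt dmax := by
    rw [hS]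
    apply sNorm_diagonal_le _ _ (Real.sqrt_nonneg _)
    intro i
    rw [abs_of_pos (hspos i)]
    exact Real.sqrt_le_sqrt (Finset.le_sup' d (Finset.mem_univ i))
  have hS'norm : sNorm S' ≤ (Real.sqrt dmin)⁻¹ := by
    rw [hS']
    apply sNorm_diagonal_le _ _ (inv_nonneg.mpr (Real.sqrt_nonneg _))
    intro i
    rw [abs_of_pos (inv_pos.mpr (hspos i))]
    exact inv_anti₀ hsmin (Real.sqrt_le_sqrt (Finset.inf'_le d (Finset.mem_univ i)))
  have hden : (0:ℝ) < 1 - α * μ := by linarith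
  have hRWnorm : sNorm (R * W) ≤ μ * (1 - α * μ)⁻¹ :=
    le_trans (sNorm_mul_le R W)
      (mul_le_mul hRnorm hWnorm (sNorm_nonneg W) hμ0)
  have t1 : vNorm2 ((R * W) *ᵥ z) ≤ sNorm (R * W) * (sNorm S' * vNorm2 v) := by
    refine le_trans (mulVec_vNorm2_le _ _) ?_
    refine mul_le_mul_of_nonneg_left ?_ (sNorm_nonneg _)
    rw [hz]
    exact mulVec_vNorm2_le _ _
  have t0 : vNorm2 B ≤ sNorm S * (sNorm (R * W) * (sNorm S' * vNorm2 v)) := by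
    rw [hB]
    exact le_trans (mulVec_vNorm2_le _ _) (mul_le_mul_of_nonneg_left t1 (sNorm_nonneg _))
  have hBnorm : vNorm2 B
      ≤ Real.sqrt dmax * (μ * (1 - α * μ)⁻¹ * ((Real.sqrt dmin)⁻¹ * (C / Real.sqrt n))) := by
    refine le_trans t0 ?_
    have inner : sNorm S' * vNorm2 v ≤ (Real.sqrt dmin)⁻¹ * (C / Real.sqrt n) :=
      mul_le_mul hS'norm hv2 (vNorm2_nonneg v) (inv_nonneg.mpr (Real.sqrt_nonneg _))
    have mid : sNorm (R * W) * (sNorm S' * vNorm2 v)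
        ≤ μ * (1 - α * μ)⁻¹ * ((Real.sqrt dmin)⁻¹ * (C / Real.sqrt n)) :=
      mul_le_mul hRWnorm inner (mul_nonneg (sNorm_nonneg _) (vNorm2_nonneg _))
        (mul_nonneg hμ0 (inv_nonneg.mpr hden.le))
    exact mul_le_mul hSnorm mid
      (mul_nonneg (sNorm_nonneg _) (mul_nonneg (sNorm_nonneg _) (vNorm2_nonneg _)))
      (Real.sqrt_nonneg _)
  have hfac : (0:ℝ) ≤ (1 - α) * α := mul_nonneg h1mα.le hα0.le
  have hsum : ∑ i, |π i - πbar i| ≤ ((1 - α) * α) * (Real.sqrt n * vNorm2 B) := by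
    have habs : ∀ i, |π i - πbar i| = ((1 - α) * α) * |B i| := fun i => by
      rw [hkey i, abs_mul, abs_of_nonneg hfac]
    calc ∑ i, |π i - πbar i| = ∑ i, ((1 - α) * α) * |B i| :=
          Finset.sum_congr rfl fun i _ => habs i
      _ = ((1 - α) * α) * ∑ i, |B i| := by rw [Finset.mul_sum]
      _ ≤ ((1 - α) * α) * (Real.sqrt n * vNorm2 B) :=
          mul_le_mul_of_nonneg_left (sum_abs_le_sqrt_card_mul B) hfac
  have hns : Real.sqrt n * (Real.sqrt n)⁻¹ = 1 := by
    have : (0:ℝ) < Real.sqrt n := Real.sqrt_pos.mpr (by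
      exact_mod_cast Nat.pos_of_ne_zero (NeZero.ne n))
    exact mul_inv_cancel₀ this.ne'
  have hratio : Real.sqrt dmax * (Real.sqrt dmin)⁻¹ ≤ Real.sqrt K := by
    rw [← Real.sqrt_inv, ← Real.sqrt_mul hdmaxpos.le, ← div_eq_mul_inv]
    exact Real.sqrt_le_sqrt hdeg
  have hfinal : ∑ i, |π i - πbar i| ≤ (1 - α) * C * Real.sqrt K * (α * μ / (1 - α * μ)) := by
    have step2 : ((1 - α) * α) * (Real.sqrt n * vNorm2 B)
        ≤ ((1 - α) * α) * (Real.sqrt n *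
          (Real.sqrt dmax * (μ * (1 - α * μ)⁻¹ * ((Real.sqrt dmin)⁻¹ * (C / Real.sqrt n))))) :=
      mul_le_mul_of_nonneg_left
        (mul_le_mul_of_nonneg_left hBnorm (Real.sqrt_nonneg _)) hfac
    have heq : ((1 - α) * α) * (Real.sqrt n *
          (Real.sqrt dmax * (μ * (1 - α * μ)⁻¹ * ((Real.sqrt dmin)⁻¹ * (C / Real.sqrt n)))))
        = ((1 - α) * C) * (Real.sqrt dmax * (Real.sqrt dmin)⁻¹) * (α * μ / (1 - α * μ))
          * (Real.sqrt n * (Real.sqrt n)⁻¹) := by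
      rw [div_eq_mul_inv C, div_eq_mul_inv (α * μ)]
      ring
    have hG : (0:ℝ) ≤ α * μ / (1 - α * μ) :=
      div_nonneg (mul_nonneg hα0.le hμ0) hden.le
    have step3 : ((1 - α) * C) * (Real.sqrt dmax * (Real.sqrt dmin)⁻¹) * (α * μ / (1 - α * μ))
        ≤ ((1 - α) * C) * Real.sqrt K * (α * μ / (1 - α * μ)) :=
      mul_le_mul_of_nonneg_right
        (mul_le_mul_of_nonneg_left hratio (mul_nonneg h1mα.le hC.le)) hG
    calc ∑ i, |π i - πbar i| ≤ ((1 - α) * α) * (Real.sqrt n * vNorm2 B) := hsum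
      _ ≤ _ := step2
      _ = ((1 - α) * C) * (Real.sqrt dmax * (Real.sqrt dmin)⁻¹) * (α * μ / (1 - α * μ)) := by
          rw [heq, hns, mul_one]
      _ ≤ ((1 - α) * C) * Real.sqrt K * (α * μ / (1 - α * μ)) := step3
      _ = (1 - α) * C * Real.sqrt K * (α * μ / (1 - α * μ)) := by ring
  linarith
end

section
/- The error between PageRank and its degree-based approximation admits the exact matrix representation π − π̄ = α(1−α) · D^{1/2} (I − αQ)^{-1} (Q − u₁u₁ᵀ) D^{-1/2} v (in particular I − αQ is invertible). -/
open Matrix Finset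

/-- exact representation of the PageRank approximation error:
`π − π̄ = α(1−α) · D^{1/2}(I − αQ)^{-1}(Q − u₁u₁ᵀ)D^{-1/2} v`, with `I − αQ` invertible. -/
theorem pagerank_error_exact_representation
    (n : ℕ) [NeZero n]
    (A : Matrix (Fin n) (Fin n) ℝ) (hAsymm : A.IsSymm) (hA0 : ∀ i j, 0 ≤ A i j)
    (d : Fin n → ℝ) (hd : ∀ i, d i = ∑ j, A i j) (hdpos : ∀ i, 0 < d i)
    (α : ℝ) (hα : α ∈ Set.Ioo (0 : ℝ) 1)
    (v : Fin n → ℝ) (hv1 : ∑ i, v i = 1)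
    (P : Matrix (Fin n) (Fin n) ℝ)
    (hP : P = A * Matrix.diagonal (fun i => (d i)⁻¹))
    (Q : Matrix (Fin n) (Fin n) ℝ)
    (hQ : Q = Matrix.diagonal (fun i => (Real.sqrt (d i))⁻¹) * A *
      Matrix.diagonal (fun i => (Real.sqrt (d i))⁻¹))
    (u₁ : Fin n → ℝ)
    (hu₁ : u₁ = fun i => Real.sqrt (d i) / Real.sqrt (∑ j, d j))
    (π : Fin n → ℝ) (hπ : π = (1 - α) • ((1 - α • P)⁻¹ *ᵥ v))
    (πbar : Fin n → ℝ)
    (hπbar : πbar = fun i => α * d i / (∑ j, d j) + (1 - α) * v i) :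
    IsUnit (1 - α • Q) ∧
      π - πbar =
        (α * (1 - α)) •
          ((Matrix.diagonal (fun i => Real.sqrt (d i)) * (1 - α • Q)⁻¹ *
              (Q - Matrix.vecMulVec u₁ u₁) *
              Matrix.diagonal (fun i => (Real.sqrt (d i))⁻¹)) *ᵥ v) := by
  obtain ⟨hα0, hα1⟩ := hα
  have hvolpos : 0 < ∑ j, d j :=
    Finset.sum_pos (fun i _ => hdpos i) Finset.univ_nonempty
  set vol : ℝ := ∑ j, d j with hvol
  have hsd : ∀ i, 0 < Real.sqrt (d i) := fun i => Real.sqrt_pos.mpr (hdpos i)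
  have hsdsq : ∀ i, Real.sqrt (d i) * Real.sqrt (d i) = d i := fun i =>
    Real.mul_self_sqrt (hdpos i).le
  set S : Matrix (Fin n) (Fin n) ℝ := Matrix.diagonal (fun i => Real.sqrt (d i)) with hS
  set T : Matrix (Fin n) (Fin n) ℝ := Matrix.diagonal (fun i => (Real.sqrt (d i))⁻¹) with hT
  have hST : S * T = 1 := by
    rw [hS, hT, Matrix.diagonal_mul_diagonal, ← Matrix.diagonal_one]
    exact congrArg Matrix.diagonal (funext fun i => mul_inv_cancel₀ (hsd i).ne')
  have hTS : T * S = 1 := by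
    rw [hS, hT, Matrix.diagonal_mul_diagonal, ← Matrix.diagonal_one]
    exact congrArg Matrix.diagonal (funext fun i => inv_mul_cancel₀ (hsd i).ne')
  -- column sums of P are 1
  have hPapp : ∀ i j, P i j = A i j * (d j)⁻¹ := by
    intro i j
    rw [hP, Matrix.mul_diagonal]
  have hPnn : ∀ i j, 0 ≤ P i j := by
    intro i j
    rw [hPapp]
    exact mul_nonneg (hA0 i j) (inv_nonneg.mpr (hdpos j).le)
  have hcolA : ∀ j, ∑ i, A i j = d j := by
    intro j
    rw [hd j]
    exact Finset.sum_congr rfl fun i _ => by rw [← hAsymm.apply i j]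
  have hPcol : ∀ j, ∑ i, P i j = 1 := by
    intro j
    simp only [hPapp]
    rw [← Finset.sum_mul, hcolA j, mul_inv_cancel₀ (hdpos j).ne']
  -- invertibility of 1 - α • P
  have hdetP : IsUnit (1 - α • P).det := by
    rw [isUnit_iff_ne_zero]
    intro hdet
    obtain ⟨y, hy0, hy⟩ := (Matrix.exists_mulVec_eq_zero_iff).mpr hdet
    have hyP : y = α • (P *ᵥ y) := by
      have := hy
      rw [Matrix.sub_mulVec, Matrix.one_mulVec, sub_eq_zero, Matrix.smul_mulVec] at this
      exact this
    have habs : ∀ i, |y i| ≤ α * ∑ j, P i j * |y j| := by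
      intro i
      have : y i = α * ∑ j, P i j * y j := by
        conv_lhs => rw [hyP]
        simp [Matrix.mulVec, dotProduct]
      rw [this, abs_mul, abs_of_pos hα0]
      gcongr
      calc |∑ j, P i j * y j| ≤ ∑ j, |P i j * y j| := Finset.abs_sum_le_sum_abs _ _
        _ = ∑ j, P i j * |y j| := by
            refine Finset.sum_congr rfl fun j _ => ?_
            rw [abs_mul, abs_of_nonneg (hPnn i j)]
    have hsum : ∑ i, |y i| ≤ α * ∑ j, |y j| := by
      calc ∑ i, |y i| ≤ ∑ i, α * ∑ j, P i j * |y j| :=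
            Finset.sum_le_sum fun i _ => habs i
        _ = α * ∑ j, (∑ i, P i j) * |y j| := by
            rw [← Finset.mul_sum, Finset.sum_comm]
            congr 1
            exact Finset.sum_congr rfl fun j _ => by rw [Finset.sum_mul]
        _ = α * ∑ j, |y j| := by
            congr 1
            exact Finset.sum_congr rfl fun j _ => by rw [hPcol j, one_mul]
    have hsnn : 0 ≤ ∑ i, |y i| := Finset.sum_nonneg fun i _ => abs_nonneg _
    have hzero : ∑ i, |y i| = 0 := by nlinarith
    apply hy0
    funext i
    have : |y i| = 0 :=
      (Finset.sum_eq_zero_iff_of_nonneg fun j _ => abs_nonneg _).mp hzero i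
        (Finset.mem_univ i)
    exact abs_eq_zero.mp this
  -- conjugation relation
  have hdiagTS : Matrix.diagonal (fun i => (d i)⁻¹) * S = T := by
    rw [hS, hT, Matrix.diagonal_mul_diagonal]
    refine congrArg Matrix.diagonal (funext fun i => ?_)
    rw [eq_comm, inv_eq_iff_eq_inv, ← hsdsq i]
    field_simp
    rw [Real.sqrt_sq (hsd i).le, pow_two, mul_div_assoc, div_self (hsd i).ne', mul_one]
  have hQTPS : Q = T * P * S := by
    have h : T * (A * Matrix.diagonal (fun i => (d i)⁻¹)) * S = T * A * T := by
      rw [Matrix.mul_assoc, Matrix.mul_assoc A, hdiagTS, ← Matrix.mul_assoc]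
    rw [hQ, hP]
    exact h.symm
  have hconj : 1 - α • Q = T * (1 - α • P) * S := by
    rw [Matrix.mul_sub, Matrix.mul_one, Matrix.sub_mul, hTS,
      Matrix.mul_smul, Matrix.smul_mul, hQTPS]
  have hSQT : S * Q * T = P := by
    rw [hQTPS, ← Matrix.mul_assoc, ← Matrix.mul_assoc, hST, Matrix.one_mul,
      Matrix.mul_assoc, hST, Matrix.mul_one]
  have hdetQ : IsUnit (1 - α • Q) := by
    rw [hconj]
    exact ((Matrix.isUnit_iff_isUnit_det T).mpr (by
        rw [hT, Matrix.det_diagonal]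
        exact isUnit_iff_ne_zero.mpr (Finset.prod_ne_zero_iff.mpr fun i _ =>
          inv_ne_zero (hsd i).ne'))).mul
      ((Matrix.isUnit_iff_isUnit_det _).mpr hdetP) |>.mul
      ((Matrix.isUnit_iff_isUnit_det S).mpr (by
        rw [hS, Matrix.det_diagonal]
        exact isUnit_iff_ne_zero.mpr (Finset.prod_ne_zero_iff.mpr fun i _ => (hsd i).ne')))
  refine ⟨hdetQ, ?_⟩
  -- inverse formula
  have hNinv : (1 - α • Q)⁻¹ = T * (1 - α • P)⁻¹ * S := by
    apply Matrix.inv_eq_right_inv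
    rw [hconj]
    calc T * (1 - α • P) * S * (T * (1 - α • P)⁻¹ * S)
        = T * (1 - α • P) * (S * T) * ((1 - α • P)⁻¹ * S) := by
          simp only [Matrix.mul_assoc]
      _ = T * ((1 - α • P) * (1 - α • P)⁻¹) * S := by
          rw [hST, Matrix.mul_one]; simp only [Matrix.mul_assoc]
      _ = 1 := by rw [Matrix.mul_nonsing_inv _ hdetP, Matrix.mul_one, hTS]
  -- the big matrix equals M * (P - W)
  have hW : S * Matrix.vecMulVec u₁ u₁ * T = Matrix.of (fun i _ => d i / vol) := by
    funext i j
    rw [hS, hT]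
    rw [Matrix.mul_diagonal, Matrix.diagonal_mul]
    simp only [Matrix.vecMulVec_apply, hu₁, Matrix.of_apply]
    have h : Real.sqrt (d i) * (Real.sqrt (d i) / Real.sqrt vol *
        (Real.sqrt (d j) / Real.sqrt vol)) * (Real.sqrt (d j))⁻¹
        = (Real.sqrt (d i) * Real.sqrt (d i)) * (Real.sqrt (d j) * (Real.sqrt (d j))⁻¹)
          / (Real.sqrt vol * Real.sqrt vol) := by ring
    rw [h, hsdsq i, mul_inv_cancel₀ (hsd j).ne', mul_one, Real.mul_self_sqrt hvolpos.le]
  have hR : S * (1 - α • Q)⁻¹ * (Q - Matrix.vecMulVec u₁ u₁) * T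
      = (1 - α • P)⁻¹ * (P - Matrix.of (fun i _ => d i / vol)) := by
    rw [hNinv]
    calc S * (T * (1 - α • P)⁻¹ * S) * (Q - Matrix.vecMulVec u₁ u₁) * T
        = (S * T) * (1 - α • P)⁻¹ * (S * (Q - Matrix.vecMulVec u₁ u₁) * T) := by
          simp only [Matrix.mul_assoc]
      _ = (1 - α • P)⁻¹ * (S * Q * T - S * Matrix.vecMulVec u₁ u₁ * T) := by
          rw [hST, Matrix.one_mul, Matrix.mul_sub, Matrix.sub_mul]
      _ = (1 - α • P)⁻¹ * (P - Matrix.of (fun i _ => d i / vol)) := by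
          rw [hSQT, hW]
  -- P *ᵥ d = d
  have hPd : P *ᵥ d = d := by
    funext i
    rw [hP, ← Matrix.mulVec_mulVec]
    have h1 : Matrix.diagonal (fun i => (d i)⁻¹) *ᵥ d = fun _ => (1 : ℝ) := by
      funext k
      rw [Matrix.mulVec_diagonal, inv_mul_cancel₀ (hdpos k).ne']
    rw [h1]
    simp only [Matrix.mulVec, dotProduct, mul_one]
    exact (hd i).symm
  -- W *ᵥ v
  have hWv : Matrix.of (fun i _ => d i / vol) *ᵥ v = fun i => d i / vol := by
    funext i
    simp only [Matrix.mulVec, dotProduct, Matrix.of_apply]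
    rw [← Finset.mul_sum, hv1, mul_one]
  -- key vector identity
  have hNkey : (1 - α • P) *ᵥ (π - πbar)
      = (α * (1 - α)) • (P *ᵥ v - fun i => d i / vol) := by
    have hNπ : (1 - α • P) *ᵥ π = (1 - α) • v := by
      rw [hπ, Matrix.mulVec_smul, Matrix.mulVec_mulVec,
        Matrix.mul_nonsing_inv _ hdetP, Matrix.one_mulVec]
    rw [Matrix.mulVec_sub, hNπ]
    have hPπbar : (1 - α • P) *ᵥ πbar = πbar - α • (P *ᵥ πbar) := by
      rw [Matrix.sub_mulVec, Matrix.one_mulVec, Matrix.smul_mulVec]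
    rw [hPπbar]
    have hπbar2 : πbar = (α / vol) • d + (1 - α) • v := by
      funext i
      simp only [hπbar, Pi.add_apply, Pi.smul_apply, smul_eq_mul, ← hvol]
      ring
    have hPπbar2 : P *ᵥ πbar = (α / vol) • d + (1 - α) • (P *ᵥ v) := by
      rw [hπbar2, Matrix.mulVec_add, Matrix.mulVec_smul, Matrix.mulVec_smul, hPd]
    rw [hPπbar2, hπbar2]
    funext i
    simp only [Pi.sub_apply, Pi.add_apply, Pi.smul_apply, smul_eq_mul]
    field_simp
    ring
  -- conclude
  have hfinal : π - πbar
      = (α * (1 - α)) • ((1 - α • P)⁻¹ *ᵥ (P *ᵥ v - fun i => d i / vol)) := by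
    have h2 := congrArg (fun x => (1 - α • P)⁻¹ *ᵥ x) hNkey
    simp only [Matrix.mulVec_mulVec, Matrix.mulVec_smul] at h2
    rwa [Matrix.nonsing_inv_mul _ hdetP, Matrix.one_mulVec] at h2
  rw [hfinal, hR]
  congr 1
  rw [← Matrix.mulVec_mulVec, Matrix.sub_mulVec, hWv]
end

section
/- For every α ∈ [0,1), the matrix I − αQ is invertible and ‖(I − αQ)^{-1}‖_∞ ≤ √(d_max/d_min) / (1 − α). -/
open Matrix Finset

/-- Maximum absolute row-sum norm of a matrix (operator norm induced by the
max vector norm). -/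
noncomputable def mNormInf {n : ℕ} (M : Matrix (Fin n) (Fin n) ℝ) : ℝ :=
  ⨆ i, ∑ j, |M i j|

attribute [local instance] Matrix.linftyOpNormedRing Matrix.linftyOpNormedAlgebra

lemma rowsum_le_linfty_norm {n : ℕ} (X : Matrix (Fin n) (Fin n) ℝ) (i : Fin n) :
    ∑ j, |X i j| ≤ ‖X‖ := by
  rw [Matrix.linfty_opNorm_def]
  have h1 : (∑ j, ‖X i j‖₊ : NNReal) ≤ (Finset.univ : Finset (Fin n)).sup
      fun i => ∑ j, ‖X i j‖₊ :=
    Finset.le_sup (f := fun i => ∑ j, ‖X i j‖₊) (Finset.mem_univ i)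
  have h2 : (((∑ j, ‖X i j‖₊ : NNReal)) : ℝ) = ∑ j, |X i j| := by
    push_cast
    simp [Real.norm_eq_abs]
  rw [← h2]
  exact_mod_cast h1

lemma entry_continuous {n : ℕ} (i j : Fin n) :
    Continuous (fun M : Matrix (Fin n) (Fin n) ℝ => M i j) := by
  refine (LipschitzWith.of_dist_le_mul (K := 1)
    (fun M N => ?_)).continuous
  rw [Real.dist_eq, dist_eq_norm, NNReal.coe_one, one_mul]
  have : M i j - N i j = (M - N) i j := by simp
  rw [this]
  calc |(M - N) i j| ≤ ∑ j', |(M - N) i j'| :=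
        Finset.single_le_sum (f := fun j' => |(M - N) i j'|)
          (fun k _ => abs_nonneg _) (Finset.mem_univ j)
    _ ≤ ‖M - N‖ := rowsum_le_linfty_norm _ _

/-- for every `α ∈ [0,1)`, `I − αQ` is invertible and
`‖(I − αQ)^{-1}‖_∞ ≤ √(d_max/d_min)/(1 − α)`. -/
theorem resolvent_inf_norm_bound
    (n : ℕ) [NeZero n]
    (A : Matrix (Fin n) (Fin n) ℝ) (hAsymm : A.IsSymm) (hA0 : ∀ i j, 0 ≤ A i j)
    (d : Fin n → ℝ) (hd : ∀ i, d i = ∑ j, A i j) (hdpos : ∀ i, 0 < d i)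
    (Q : Matrix (Fin n) (Fin n) ℝ)
    (hQ : Q = Matrix.diagonal (fun i => (Real.sqrt (d i))⁻¹) * A *
      Matrix.diagonal (fun i => (Real.sqrt (d i))⁻¹))
    (α : ℝ) (hα : α ∈ Set.Ico (0 : ℝ) 1) :
    IsUnit (1 - α • Q) ∧
      mNormInf ((1 - α • Q)⁻¹) ≤
        Real.sqrt (univ.sup' univ_nonempty d / univ.inf' univ_nonempty d) / (1 - α) := by
  haveI : CompleteSpace (Matrix (Fin n) (Fin n) ℝ) :=
    inferInstanceAs (CompleteSpace (Fin n → Fin n → ℝ))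
  obtain ⟨hα0, hα1⟩ := hα
  have h1α : (0:ℝ) < 1 - α := by linarith
  set s : Fin n → ℝ := fun i => Real.sqrt (d i) with hs
  have hspos : ∀ i, 0 < s i := fun i => Real.sqrt_pos.2 (hdpos i)
  have hss : ∀ i, s i * s i = d i := fun i => Real.mul_self_sqrt (hdpos i).le
  set P : Matrix (Fin n) (Fin n) ℝ := Matrix.diagonal (fun i => (d i)⁻¹) * A with hP
  have hPentry : ∀ i j, P i j = (d i)⁻¹ * A i j := by
    intro i j; simp [hP, Matrix.diagonal_mul]
  have hP0 : ∀ i j, 0 ≤ P i j := fun i j => by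
    rw [hPentry]; exact mul_nonneg (inv_nonneg.2 (hdpos i).le) (hA0 i j)
  have hProw : ∀ i, ∑ j, P i j = 1 := by
    intro i
    simp_rw [hPentry]
    rw [← Finset.mul_sum, ← hd, inv_mul_cancel₀ (hdpos i).ne']
  -- norm bound on α • P
  have hPn : ‖P‖ ≤ 1 := by
    rw [Matrix.linfty_opNorm_def]
    have : ((Finset.univ : Finset (Fin n)).sup fun i => ∑ j, ‖P i j‖₊) ≤ 1 := by
      refine Finset.sup_le fun i _ => ?_
      rw [← NNReal.coe_le_coe]
      push_cast
      calc ∑ j, ‖P i j‖ = ∑ j, P i j := by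
            refine Finset.sum_congr rfl fun j _ => ?_
            rw [Real.norm_eq_abs, abs_of_nonneg (hP0 i j)]
        _ = 1 := hProw i
        _ ≤ 1 := le_rfl
    exact_mod_cast this
  have hnorm : ‖α • P‖ < 1 := by
    rw [norm_smul, Real.norm_eq_abs, abs_of_nonneg hα0]
    calc α * ‖P‖ ≤ α * 1 := by
          exact mul_le_mul_of_nonneg_left hPn hα0
      _ < 1 := by linarith
  have hUnitP : IsUnit (1 - α • P) := isUnit_one_sub_of_norm_lt_one hnorm
  set R : Matrix (Fin n) (Fin n) ℝ := (1 - α • P)⁻¹ with hR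
  have hRsum : HasSum (fun k : ℕ => (α • P) ^ k) R := by
    have h := hasSum_geom_series_inverse (α • P) hnorm
    rwa [← Matrix.nonsing_inv_eq_ringInverse] at h
  -- nonnegativity of entries of R
  have hpow0 : ∀ (k : ℕ) i j, 0 ≤ ((α • P) ^ k) i j := by
    intro k
    induction k with
    | zero =>
      intro i j
      simp only [pow_zero]
      rw [Matrix.one_apply]
      split <;> norm_num
    | succ k ih =>
      intro i j
      rw [pow_succ, Matrix.mul_apply]
      refine Finset.sum_nonneg fun l _ => mul_nonneg (ih i l) ?_
      rw [Matrix.smul_apply, smul_eq_mul]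
      exact mul_nonneg hα0 (hP0 l j)
  have hR0 : ∀ i j, 0 ≤ R i j := by
    intro i j
    have ht : Filter.Tendsto (fun t : Finset ℕ => ∑ k ∈ t, ((α • P) ^ k) i j)
        Filter.atTop (nhds (R i j)) := by
      have h := ((entry_continuous i j).tendsto R).comp hRsum
      simpa [Function.comp_def, Matrix.sum_apply] using h
    exact ge_of_tendsto' ht fun t => Finset.sum_nonneg fun k _ => hpow0 k i j
  -- row sums of R
  have hUdet : IsUnit (1 - α • P).det := (Matrix.isUnit_iff_isUnit_det _).1 hUnitP
  have hRU : R * (1 - α • P) = 1 := Matrix.nonsing_inv_mul _ hUdet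
  have hUrow : ∀ k, ∑ j, (1 - α • P) k j = 1 - α := by
    intro k
    have : ∀ j, (1 - α • P) k j = (1 : Matrix (Fin n) (Fin n) ℝ) k j - α * P k j := by
      intro j; simp [Matrix.sub_apply, Matrix.smul_apply]
    simp_rw [this]
    rw [Finset.sum_sub_distrib, ← Finset.mul_sum, hProw k]
    simp [Matrix.one_apply]
  have hRrow : ∀ i, ∑ j, R i j = (1 - α)⁻¹ := by
    intro i
    have h1 : ∑ j, (R * (1 - α • P)) i j = 1 := by
      rw [hRU]; simp [Matrix.one_apply]
    have h2 : ∑ j, (R * (1 - α • P)) i j = (∑ k, R i k) * (1 - α) := by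
      simp_rw [Matrix.mul_apply]
      rw [Finset.sum_comm]
      calc ∑ k, ∑ j, R i k * (1 - α • P) k j
          = ∑ k, R i k * ∑ j, (1 - α • P) k j := by
            refine Finset.sum_congr rfl fun k _ => ?_
            rw [Finset.mul_sum]
        _ = ∑ k, R i k * (1 - α) := by simp_rw [hUrow]
        _ = (∑ k, R i k) * (1 - α) := by rw [Finset.sum_mul]
    have := h2.symm.trans h1
    field_simp at this ⊢
    linarith [this]
  -- conjugation
  set E : Matrix (Fin n) (Fin n) ℝ := Matrix.diagonal s with hE
  set E' : Matrix (Fin n) (Fin n) ℝ := Matrix.diagonal (fun i => (s i)⁻¹) with hE'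
  have hEE' : E * E' = 1 := by
    have h : (fun i => s i * (s i)⁻¹) = fun _ : Fin n => (1:ℝ) :=
      funext fun i => mul_inv_cancel₀ (hspos i).ne'
    rw [hE, hE', Matrix.diagonal_mul_diagonal, h, Matrix.diagonal_one]
  have hE'E : E' * E = 1 := by
    have h : (fun i => (s i)⁻¹ * s i) = fun _ : Fin n => (1:ℝ) :=
      funext fun i => inv_mul_cancel₀ (hspos i).ne'
    rw [hE, hE', Matrix.diagonal_mul_diagonal, h, Matrix.diagonal_one]
  have hUnitE : IsUnit E := ⟨⟨E, E', hEE', hE'E⟩, rfl⟩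
  have hUnitE' : IsUnit E' := ⟨⟨E', E, hE'E, hEE'⟩, rfl⟩
  have hQE : Q = E * P * E' := by
    rw [hQ]
    ext i j
    simp only [hE, hE', hP, Matrix.mul_diagonal, Matrix.diagonal_mul]
    have hd' : (d i)⁻¹ = (s i)⁻¹ * (s i)⁻¹ := by
      rw [← hss i, mul_inv]
    have h1 : s i ≠ 0 := (hspos i).ne'
    have h2 : s j ≠ 0 := (hspos j).ne'
    rw [hd']
    field_simp
  have hfac : 1 - α • Q = E * (1 - α • P) * E' := by
    rw [hQE]
    calc (1 : Matrix (Fin n) (Fin n) ℝ) - α • (E * P * E')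
        = E * E' - E * (α • P) * E' := by
          rw [hEE', mul_smul_comm, smul_mul_assoc]
      _ = E * (1 - α • P) * E' := by
          rw [Matrix.mul_sub, Matrix.sub_mul, Matrix.mul_one]
  have hUnitQ : IsUnit (1 - α • Q) := by
    rw [hfac]
    exact (hUnitE.mul hUnitP).mul hUnitE'
  refine ⟨hUnitQ, ?_⟩
  have hinv : (1 - α • Q)⁻¹ = E * R * E' := by
    rw [hfac, Matrix.mul_inv_rev, Matrix.mul_inv_rev,
      Matrix.inv_eq_right_inv hEE', Matrix.inv_eq_right_inv hE'E, ← hR,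
      ← Matrix.mul_assoc]
  -- the final bound
  set dmax : ℝ := univ.sup' univ_nonempty d with hdmax
  set dmin : ℝ := univ.inf' univ_nonempty d with hdmin
  have hdminpos : 0 < dmin := by
    rw [hdmin]
    obtain ⟨i0, _, hi0⟩ := Finset.exists_mem_eq_inf' (univ_nonempty) d
    rw [hi0]; exact hdpos i0
  have hdmaxpos : 0 < dmax := by
    rw [hdmax]
    obtain ⟨i0, _, hi0⟩ := Finset.exists_mem_eq_sup' (univ_nonempty) d
    rw [hi0]; exact hdpos i0
  have hsqmin : 0 < Real.sqrt dmin := Real.sqrt_pos.2 hdminpos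
  have hbound : ∀ i, ∑ j, |(E * R * E') i j| ≤
      Real.sqrt dmax * (Real.sqrt dmin)⁻¹ * (1 - α)⁻¹ := by
    intro i
    have hentry : ∀ j, (E * R * E') i j = s i * R i j * (s j)⁻¹ := by
      intro j
      rw [hE, hE', Matrix.mul_diagonal, Matrix.diagonal_mul]
    calc ∑ j, |(E * R * E') i j| = ∑ j, s i * R i j * (s j)⁻¹ := by
          refine Finset.sum_congr rfl fun j _ => ?_
          rw [hentry j, abs_of_nonneg]
          exact mul_nonneg (mul_nonneg (hspos i).le (hR0 i j))
            (inv_nonneg.2 (hspos j).le)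
      _ ≤ ∑ j, Real.sqrt dmax * R i j * (Real.sqrt dmin)⁻¹ := by
          refine Finset.sum_le_sum fun j _ => ?_
          have h1 : s i ≤ Real.sqrt dmax :=
            Real.sqrt_le_sqrt (Finset.le_sup' d (Finset.mem_univ i))
          have h2 : (s j)⁻¹ ≤ (Real.sqrt dmin)⁻¹ := by
            refine inv_anti₀ hsqmin ?_
            exact Real.sqrt_le_sqrt (Finset.inf'_le d (Finset.mem_univ j))
          gcongr
          all_goals first
            | exact hR0 i j
            | exact mul_nonneg (Real.sqrt_nonneg _) (hR0 i j)
      _ = Real.sqrt dmax * (Real.sqrt dmin)⁻¹ * ∑ j, R i j := by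
          rw [Finset.mul_sum]
          refine Finset.sum_congr rfl fun j _ => ?_
          ring
      _ = Real.sqrt dmax * (Real.sqrt dmin)⁻¹ * (1 - α)⁻¹ := by rw [hRrow i]
  have hrhs : Real.sqrt (dmax / dmin) / (1 - α) =
      Real.sqrt dmax * (Real.sqrt dmin)⁻¹ * (1 - α)⁻¹ := by
    rw [Real.sqrt_div hdmaxpos.le, div_eq_mul_inv, div_eq_mul_inv]
  rw [hinv, hrhs]
  exact ciSup_le hbound
end

section
/- Every entry of π̄ is strictly positive, and the maximal relative error of the degree-based approximation of PageRank satisfies max_i |π_i − π̄_i| / π̄_i ≤ (1−α) · (vol(G)/√(d_min)) · ‖(I − αQ)^{-1}‖_∞ · ‖(Q − u₁u₁ᵀ) D^{-1/2} v‖_∞, where ‖x‖_∞ = max_i |x_i| for vectors. -/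
open Matrix Finset

/-- Max norm of a vector. -/
noncomputable def vNormInf {n : ℕ} (x : Fin n → ℝ) : ℝ :=
  ⨆ i, |x i|

set_option maxHeartbeats 2000000 in
/-- every entry of `π̄` is positive and the maximal relative error satisfies
`max_i |π_i − π̄_i|/π̄_i ≤ (1−α)·(vol(G)/√d_min)·‖(I − αQ)^{-1}‖_∞·‖(Q − u₁u₁ᵀ)D^{-1/2}v‖_∞`. -/
theorem pagerank_relative_error_bound
    (n : ℕ) [NeZero n]
    (A : Matrix (Fin n) (Fin n) ℝ) (hAsymm : A.IsSymm) (hA0 : ∀ i j, 0 ≤ A i j)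
    (d : Fin n → ℝ) (hd : ∀ i, d i = ∑ j, A i j) (hdpos : ∀ i, 0 < d i)
    (α : ℝ) (hα : α ∈ Set.Ioo (0 : ℝ) 1)
    (v : Fin n → ℝ) (hv0 : ∀ i, 0 ≤ v i) (hv1 : ∑ i, v i = 1)
    (P : Matrix (Fin n) (Fin n) ℝ)
    (hP : P = A * Matrix.diagonal (fun i => (d i)⁻¹))
    (Q : Matrix (Fin n) (Fin n) ℝ)
    (hQ : Q = Matrix.diagonal (fun i => (Real.sqrt (d i))⁻¹) * A *
      Matrix.diagonal (fun i => (Real.sqrt (d i))⁻¹))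
    (u₁ : Fin n → ℝ)
    (hu₁ : u₁ = fun i => Real.sqrt (d i) / Real.sqrt (∑ j, d j))
    (π : Fin n → ℝ) (hπ : π = (1 - α) • ((1 - α • P)⁻¹ *ᵥ v))
    (πbar : Fin n → ℝ)
    (hπbar : πbar = fun i => α * d i / (∑ j, d j) + (1 - α) * v i) :
    (∀ i, 0 < πbar i) ∧
      (⨆ i, |π i - πbar i| / πbar i) ≤
        (1 - α) * ((∑ j, d j) / Real.sqrt (univ.inf' univ_nonempty d)) *
          mNormInf ((1 - α • Q)⁻¹) *
          vNormInf ((Q - Matrix.vecMulVec u₁ u₁) *ᵥ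
            (Matrix.diagonal (fun i => (Real.sqrt (d i))⁻¹) *ᵥ v)) := by
  obtain ⟨hα0, hα1⟩ := hα
  have hα1' : (0:ℝ) < 1 - α := by linarith
  set vol := ∑ j, d j with hvolDef
  have hvol : 0 < vol := Finset.sum_pos (fun i _ => hdpos i) univ_nonempty
  have hspos : ∀ i, 0 < Real.sqrt (d i) := fun i => Real.sqrt_pos.mpr (hdpos i)
  have hss : ∀ i, Real.sqrt (d i) * Real.sqrt (d i) = d i :=
    fun i => Real.mul_self_sqrt (hdpos i).le
  have hsvol : Real.sqrt vol * Real.sqrt vol = vol := Real.mul_self_sqrt hvol.le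
  have hsvolpos : 0 < Real.sqrt vol := Real.sqrt_pos.mpr hvol
  have hπbarpos : ∀ i, 0 < πbar i := by
    intro i
    rw [hπbar]
    have h1 : 0 < α * d i / vol := div_pos (mul_pos hα0 (hdpos i)) hvol
    have h2 : 0 ≤ (1 - α) * v i := mul_nonneg hα1'.le (hv0 i)
    dsimp only
    linarith
  refine ⟨hπbarpos, ?_⟩
  have hPe : ∀ i j, P i j = A i j * (d j)⁻¹ := by
    intro i j; rw [hP, Matrix.mul_diagonal]
  have hQe : ∀ i j, Q i j = (Real.sqrt (d i))⁻¹ * A i j * (Real.sqrt (d j))⁻¹ := by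
    intro i j; rw [hQ, Matrix.mul_diagonal, Matrix.diagonal_mul]
  have hcol : ∀ j, ∑ i, A i j = d j := by
    intro j
    rw [hd j]
    exact Finset.sum_congr rfl fun i _ => hAsymm.apply j i
  -- determinant of 1 - α•P is nonzero
  have hdetP : (1 - α • P).det ≠ 0 := by
    intro h0
    obtain ⟨x, hx0, hx⟩ := Matrix.exists_mulVec_eq_zero_iff.mpr h0
    have hxc : ∀ i, x i = α * ∑ j, P i j * x j := by
      intro i
      have h1 := congrFun hx i
      rw [Matrix.sub_mulVec, Matrix.smul_mulVec, Matrix.one_mulVec] at h1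
      simp only [Pi.sub_apply, Pi.smul_apply, smul_eq_mul, Pi.zero_apply] at h1
      have h2 : (P *ᵥ x) i = ∑ j, P i j * x j := by simp [Matrix.mulVec, dotProduct]
      rw [h2] at h1
      linarith
    have hPnn : ∀ i j, 0 ≤ P i j := fun i j => by
      rw [hPe]; exact mul_nonneg (hA0 i j) (inv_nonneg.mpr (hdpos j).le)
    have hcolP : ∀ j, ∑ i, P i j = 1 := by
      intro j
      have h2 : ∑ i, P i j = (∑ i, A i j) * (d j)⁻¹ := by
        rw [Finset.sum_mul]
        exact Finset.sum_congr rfl fun i _ => hPe i j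
      rw [h2, hcol, mul_inv_cancel₀ (hdpos j).ne']
    have hle : ∑ i, |x i| ≤ α * ∑ j, |x j| := by
      calc ∑ i, |x i| = ∑ i, α * |∑ j, P i j * x j| := by
            refine Finset.sum_congr rfl fun i _ => ?_
            rw [hxc i, abs_mul, abs_of_pos hα0]
        _ ≤ ∑ i, α * ∑ j, P i j * |x j| := by
            refine Finset.sum_le_sum fun i _ => ?_
            refine mul_le_mul_of_nonneg_left ?_ hα0.le
            calc |∑ j, P i j * x j| ≤ ∑ j, |P i j * x j| := Finset.abs_sum_le_sum_abs _ _
              _ = ∑ j, P i j * |x j| := Finset.sum_congr rfl fun j _ => by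
                  rw [abs_mul, abs_of_nonneg (hPnn i j)]
        _ = α * ∑ j, (∑ i, P i j) * |x j| := by
            rw [← Finset.mul_sum, Finset.sum_comm]
            congr 1
            exact Finset.sum_congr rfl fun j _ => (Finset.sum_mul _ _ _).symm
        _ = α * ∑ j, |x j| := by
            congr 1
            exact Finset.sum_congr rfl fun j _ => by rw [hcolP j, one_mul]
    have hxpos : 0 < ∑ i, |x i| := by
      obtain ⟨i, hi⟩ := Function.ne_iff.mp hx0
      exact Finset.sum_pos' (fun j _ => abs_nonneg _) ⟨i, Finset.mem_univ i, abs_pos.mpr hi⟩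
    nlinarith
  -- similarity: E' (1-αP) E = 1-αQ
  have hinv : ∀ j, (Real.sqrt (d j))⁻¹ * (Real.sqrt (d j))⁻¹ = (d j)⁻¹ := by
    intro j; rw [← mul_inv, hss]
  have hE'E : (Matrix.diagonal fun i => (Real.sqrt (d i))⁻¹) *
      (Matrix.diagonal fun i => Real.sqrt (d i)) = (1 : Matrix (Fin n) (Fin n) ℝ) := by
    rw [Matrix.diagonal_mul_diagonal]
    rw [show (fun i => (Real.sqrt (d i))⁻¹ * Real.sqrt (d i)) = fun _ => (1:ℝ) from
      funext fun i => inv_mul_cancel₀ (hspos i).ne']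
    exact Matrix.diagonal_one
  have hNM : (Matrix.diagonal fun i => (Real.sqrt (d i))⁻¹) * (1 - α • P) *
      (Matrix.diagonal fun i => Real.sqrt (d i)) = 1 - α • Q := by
    ext i j
    rw [Matrix.mul_diagonal, Matrix.diagonal_mul]
    simp only [Matrix.sub_apply, Matrix.smul_apply, Matrix.one_apply, hQe, hPe, smul_eq_mul]
    obtain ⟨ti, hti⟩ : ∃ t, Real.sqrt (d i) = t := ⟨_, rfl⟩
    obtain ⟨tj, htj⟩ : ∃ t, Real.sqrt (d j) = t := ⟨_, rfl⟩
    have htipos : 0 < ti := hti ▸ hspos i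
    have htjpos : 0 < tj := htj ▸ hspos j
    have hdi : d i = ti * ti := by rw [← hti]; exact (hss i).symm
    have hdj : d j = tj * tj := by rw [← htj]; exact (hss j).symm
    rw [hti, htj, hdj]
    rcases eq_or_ne i j with rfl | hij
    · obtain rfl : ti = tj := by rw [← hti, ← htj]
      simp only [if_pos rfl]
      field_simp
    · simp only [if_neg hij]
      field_simp
      ring
  have hdetQ : (1 - α • Q).det ≠ 0 := by
    rw [← hNM, Matrix.det_mul, Matrix.det_mul]
    have h1 : (Matrix.diagonal fun i => (Real.sqrt (d i))⁻¹).det *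
        (Matrix.diagonal fun i => Real.sqrt (d i)).det = 1 := by
      rw [← Matrix.det_mul, hE'E, Matrix.det_one]
    intro h
    apply hdetP
    calc (1 - α • P).det
        = (Matrix.diagonal fun i => (Real.sqrt (d i))⁻¹).det * (1 - α • P).det *
          (Matrix.diagonal fun i => Real.sqrt (d i)).det := by
          linear_combination (-(1 - α • P).det) * h1
      _ = 0 := h
  set B := (1 - α • Q)⁻¹ with hB
  have hBN : B * (1 - α • Q) = 1 := Matrix.nonsing_inv_mul _ (Ne.isUnit hdetQ)
  -- PageRank equation componentwise
  have hπc : ∀ i, π i = (1 - α) * v i + α * ∑ j, A i j * (d j)⁻¹ * π j := by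
    have h1 : (1 - α • P) *ᵥ π = (1 - α) • v := by
      rw [hπ, Matrix.mulVec_smul, Matrix.mulVec_mulVec,
        Matrix.mul_nonsing_inv _ (Ne.isUnit hdetP), Matrix.one_mulVec]
    intro i
    have h2 := congrFun h1 i
    rw [Matrix.sub_mulVec, Matrix.smul_mulVec, Matrix.one_mulVec] at h2
    simp only [Pi.sub_apply, Pi.smul_apply, smul_eq_mul] at h2
    have h2' : (P *ᵥ π) i = ∑ j, P i j * π j := by simp [Matrix.mulVec, dotProduct]
    rw [h2'] at h2
    have h3 : ∑ j, P i j * π j = ∑ j, A i j * (d j)⁻¹ * π j :=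
      Finset.sum_congr rfl fun j _ => by rw [hPe]
    rw [h3] at h2
    linarith
  set y : Fin n → ℝ := (Matrix.diagonal fun i => (Real.sqrt (d i))⁻¹) *ᵥ v with hy
  have hyc : ∀ i, y i = (Real.sqrt (d i))⁻¹ * v i := fun i => Matrix.mulVec_diagonal _ _ _
  set r := (Q - Matrix.vecMulVec u₁ u₁) *ᵥ y with hr
  set w : Fin n → ℝ := fun i => (Real.sqrt (d i))⁻¹ * (π i - πbar i) with hw
  have hrc : ∀ i, r i = (Real.sqrt (d i))⁻¹ * (∑ j, A i j * (d j)⁻¹ * v j)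
      - Real.sqrt (d i) / vol := by
    intro i
    have h1 : r i = ∑ j, ((Real.sqrt (d i))⁻¹ * (A i j * (d j)⁻¹ * v j)
        - Real.sqrt (d i) / vol * v j) := by
      rw [hr]
      simp only [Matrix.mulVec, dotProduct]
      refine Finset.sum_congr rfl fun j _ => ?_
      rw [Matrix.sub_apply, Matrix.vecMulVec_apply, hQe, hyc, hu₁]
      dsimp only
      obtain ⟨ti, hti⟩ : ∃ t, Real.sqrt (d i) = t := ⟨_, rfl⟩
      obtain ⟨tj, htj⟩ : ∃ t, Real.sqrt (d j) = t := ⟨_, rfl⟩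
      obtain ⟨c, hc⟩ : ∃ t, Real.sqrt vol = t := ⟨_, rfl⟩
      have htipos : 0 < ti := hti ▸ hspos i
      have htjpos : 0 < tj := htj ▸ hspos j
      have hcpos : 0 < c := hc ▸ hsvolpos
      have hdj : d j = tj * tj := by rw [← htj]; exact (hss j).symm
      have hvv : vol = c * c := by rw [← hc]; exact hsvol.symm
      rw [hti, htj, hc, hdj, hvv]
      field_simp
    rw [h1, Finset.sum_sub_distrib, ← Finset.mul_sum, ← Finset.mul_sum, hv1, mul_one]
  -- the key identity
  have hLc : (1 - α • Q) *ᵥ w = (α * (1 - α)) • r := by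
    funext i
    rw [Matrix.sub_mulVec, Matrix.smul_mulVec, Matrix.one_mulVec]
    simp only [Pi.sub_apply, Pi.smul_apply, smul_eq_mul]
    have hQwv : (Q *ᵥ w) i = ∑ j, Q i j * w j := by simp [Matrix.mulVec, dotProduct]
    rw [hQwv]
    have hQw : ∀ j, Q i j * w j = (Real.sqrt (d i))⁻¹ * (A i j * ((d j)⁻¹ * (π j - πbar j))) := by
      intro j
      rw [hQe, hw]
      dsimp only
      rw [← hinv j]
      ring
    rw [Finset.sum_congr rfl fun j _ => hQw j, ← Finset.mul_sum]
    have hsplit : ∑ j, A i j * ((d j)⁻¹ * (π j - πbar j))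
        = (∑ j, A i j * (d j)⁻¹ * π j) - (α * d i / vol + (1 - α) * ∑ j, A i j * (d j)⁻¹ * v j) := by
      have h4 : ∀ j, A i j * ((d j)⁻¹ * (π j - πbar j))
          = A i j * (d j)⁻¹ * π j - ((α / vol) * A i j + (1 - α) * (A i j * (d j)⁻¹ * v j)) := by
        intro j
        rw [hπbar]
        dsimp only
        field_simp [(hdpos j).ne', hvol.ne']
      rw [Finset.sum_congr rfl fun j _ => h4 j, Finset.sum_sub_distrib, Finset.sum_add_distrib,
        ← Finset.mul_sum, ← Finset.mul_sum, ← hd i]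
      ring
    rw [hsplit, hrc i, hw]
    dsimp only
    rw [hπc i, hπbar]
    dsimp only
    obtain ⟨ti, hti⟩ : ∃ t, Real.sqrt (d i) = t := ⟨_, rfl⟩
    have htipos : 0 < ti := hti ▸ hspos i
    have hdi : d i = ti * ti := by rw [← hti]; exact (hss i).symm
    rw [hti, hdi]
    field_simp
    ring
  have hwB : w = (α * (1 - α)) • (B *ᵥ r) := by
    have h1 := congrArg (fun z => B *ᵥ z) hLc
    simpa [Matrix.mulVec_mulVec, hBN, Matrix.one_mulVec, Matrix.mulVec_smul] using h1
  -- norms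
  have hne : Nonempty (Fin n) := ⟨⟨0, Nat.pos_of_ne_zero (NeZero.ne n)⟩⟩
  have hBdd1 : BddAbove (Set.range fun i => ∑ j, |B i j|) :=
    Set.Finite.bddAbove (Set.finite_range _)
  have hBdd2 : BddAbove (Set.range fun i => |r i|) :=
    Set.Finite.bddAbove (Set.finite_range _)
  have hMle : ∀ i, ∑ j, |B i j| ≤ mNormInf B := fun i => le_ciSup hBdd1 i
  have hVle : ∀ i, |r i| ≤ vNormInf r := fun i => le_ciSup hBdd2 i
  obtain ⟨i0⟩ := hne
  have hV0 : 0 ≤ vNormInf r := le_trans (abs_nonneg _) (hVle i0)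
  have hM0 : 0 ≤ mNormInf B :=
    le_trans (Finset.sum_nonneg fun j _ => abs_nonneg _) (hMle i0)
  have hBr : ∀ i, |(B *ᵥ r) i| ≤ mNormInf B * vNormInf r := by
    intro i
    calc |(B *ᵥ r) i| = |∑ j, B i j * r j| := by simp [Matrix.mulVec, dotProduct]
      _ ≤ ∑ j, |B i j * r j| := Finset.abs_sum_le_sum_abs _ _
      _ = ∑ j, |B i j| * |r j| := Finset.sum_congr rfl fun j _ => abs_mul _ _
      _ ≤ ∑ j, |B i j| * vNormInf r :=
          Finset.sum_le_sum fun j _ => mul_le_mul_of_nonneg_left (hVle j) (abs_nonneg _)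
      _ = (∑ j, |B i j|) * vNormInf r := (Finset.sum_mul _ _ _).symm
      _ ≤ mNormInf B * vNormInf r := mul_le_mul_of_nonneg_right (hMle i) hV0
  -- min degree
  set dm := univ.inf' univ_nonempty d with hdm
  have hdmle : ∀ i, dm ≤ d i := fun i => Finset.inf'_le d (Finset.mem_univ i)
  have hdmpos : 0 < dm := by
    obtain ⟨i, _, hi⟩ := Finset.exists_mem_eq_inf' (univ_nonempty) d
    rw [hdm, hi]; exact hdpos i
  have hsdm : 0 < Real.sqrt dm := Real.sqrt_pos.mpr hdmpos
  -- final per-index bound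
  refine ciSup_le fun i => ?_
  rw [div_le_iff₀ (hπbarpos i)]
  have hwi : |π i - πbar i| = Real.sqrt (d i) * |w i| := by
    rw [hw]
    dsimp only
    rw [abs_mul, abs_of_nonneg (inv_nonneg.mpr (hspos i).le), ← mul_assoc,
      mul_inv_cancel₀ (hspos i).ne', one_mul]
  have hwabs : |w i| ≤ α * (1 - α) * (mNormInf B * vNormInf r) := by
    rw [hwB]
    dsimp only [Pi.smul_apply, smul_eq_mul]
    rw [abs_mul, abs_of_pos (mul_pos hα0 hα1')]
    exact mul_le_mul_of_nonneg_left (hBr i) (mul_pos hα0 hα1').le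
  have hstep1 : |π i - πbar i| ≤ Real.sqrt (d i) * (α * (1 - α) * (mNormInf B * vNormInf r)) :=
    hwi ▸ mul_le_mul_of_nonneg_left hwabs (hspos i).le
  have hsd : Real.sqrt (d i) ≤ d i / Real.sqrt dm := by
    rw [le_div_iff₀ hsdm]
    calc Real.sqrt (d i) * Real.sqrt dm ≤ Real.sqrt (d i) * Real.sqrt (d i) :=
          mul_le_mul_of_nonneg_left (Real.sqrt_le_sqrt (hdmle i)) (hspos i).le
      _ = d i := hss i
  have hRHS0 : 0 ≤ (1 - α) * (vol / Real.sqrt dm) * mNormInf B * vNormInf r :=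
    mul_nonneg (mul_nonneg (mul_nonneg hα1'.le (div_nonneg hvol.le hsdm.le)) hM0) hV0
  have hstep2 : Real.sqrt (d i) * (α * (1 - α) * (mNormInf B * vNormInf r))
      ≤ (1 - α) * (vol / Real.sqrt dm) * mNormInf B * vNormInf r * (α * d i / vol) := by
    have hMV : 0 ≤ α * (1 - α) * (mNormInf B * vNormInf r) :=
      mul_nonneg (mul_pos hα0 hα1').le (mul_nonneg hM0 hV0)
    have heq : (1 - α) * (vol / Real.sqrt dm) * mNormInf B * vNormInf r * (α * d i / vol)
        = (d i / Real.sqrt dm) * (α * (1 - α) * (mNormInf B * vNormInf r)) := by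
      field_simp
    rw [heq]
    exact mul_le_mul_of_nonneg_right hsd hMV
  have hstep3 : (1 - α) * (vol / Real.sqrt dm) * mNormInf B * vNormInf r * (α * d i / vol)
      ≤ (1 - α) * (vol / Real.sqrt dm) * mNormInf B * vNormInf r * πbar i := by
    refine mul_le_mul_of_nonneg_left ?_ hRHS0
    rw [hπbar]
    dsimp only
    linarith [mul_nonneg hα1'.le (hv0 i)]
  linarith
end

section
/- Let n ≥ 1, let u ∈ ℝⁿ be a unit vector with 𝟙ᵀu = 0, let β ∈ ℝ and α ∈ (0,1) with αβ ≠ 1, and let v ∈ ℝⁿ with 𝟙ᵀv = 1. Set P̄ = (1/n)𝟙𝟙ᵀ + β u uᵀ. Then I − αP̄ is invertible and (1−α)(I − αP̄)^{-1} v = (α/n)𝟙 + (1−α)( v + (αβ/(1−αβ)) (uᵀv) u ). (For the Stochastic Block Model with two equal-sized communities, p, q edge probabilities, β = (p−q)/(p+q), and u_i = 1/√n on the first community and −1/√n on the second, P̄ is the averaged transition matrix and the right-hand side is the asymptotic PageRank π̄_SBM.) -/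
open Matrix Finset

/-- for `P̄ = (1/n)𝟙𝟙ᵀ + β uuᵀ` with `u` a unit vector orthogonal to `𝟙`,
`α ∈ (0,1)`, `αβ ≠ 1` and `𝟙ᵀv = 1`, the matrix `I − αP̄` is invertible and
`(1−α)(I − αP̄)^{-1} v = (α/n)𝟙 + (1−α)(v + (αβ/(1−αβ))(uᵀv)u)`. -/
theorem pagerank_rank_two_transition
    (n : ℕ) [NeZero n]
    (u : Fin n → ℝ) (hu_unit : ∑ i, (u i) ^ 2 = 1) (hu_orth : ∑ i, u i = 0)
    (β : ℝ) (α : ℝ) (hα : α ∈ Set.Ioo (0 : ℝ) 1) (hαβ : α * β ≠ 1)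
    (v : Fin n → ℝ) (hv : ∑ i, v i = 1)
    (Pbar : Matrix (Fin n) (Fin n) ℝ)
    (hPbar : Pbar = ((n : ℝ)⁻¹) • Matrix.vecMulVec (fun _ => 1) (fun _ => 1) +
      β • Matrix.vecMulVec u u) :
    IsUnit (1 - α • Pbar) ∧
      (1 - α) • ((1 - α • Pbar)⁻¹ *ᵥ v) =
        (α / n) • (fun _ => (1 : ℝ)) +
          (1 - α) • (v + (α * β / (1 - α * β)) • ((∑ i, u i * v i) • u)) := by
  obtain ⟨hα0, hα1⟩ := hα
  have hn : (n : ℝ) ≠ 0 := Nat.cast_ne_zero.mpr (NeZero.ne n)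
  have h1α : (1 : ℝ) - α ≠ 0 := by linarith
  have h1αβ : (1 : ℝ) - α * β ≠ 0 := sub_ne_zero.mpr (Ne.symm hαβ)
  set J : Matrix (Fin n) (Fin n) ℝ := Matrix.vecMulVec (fun _ => 1) (fun _ => 1) with hJ
  set U : Matrix (Fin n) (Fin n) ℝ := Matrix.vecMulVec u u with hU
  have hJJ : J * J = (n : ℝ) • J := by
    ext i j
    simp [hJ, Matrix.mul_apply, Matrix.vecMulVec_apply]
  have hJU : J * U = 0 := by
    ext i j
    simp [hJ, hU, Matrix.mul_apply, Matrix.vecMulVec_apply, ← Finset.sum_mul, hu_orth]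
  have hUJ : U * J = 0 := by
    ext i j
    simp [hJ, hU, Matrix.mul_apply, Matrix.vecMulVec_apply, mul_assoc, ← Finset.mul_sum,
      hu_orth]
  have hUU : U * U = U := by
    ext i j
    simp only [hU, Matrix.mul_apply, Matrix.vecMulVec_apply]
    have : ∀ k, u i * u k * (u k * u j) = u i * u j * (u k) ^ 2 := by intro k; ring
    rw [Finset.sum_congr rfl fun k _ => this k, ← Finset.mul_sum, hu_unit, mul_one]
  set c : ℝ := α / ((1 - α) * n) with hc
  set d : ℝ := α * β / (1 - α * β) with hd
  set N : Matrix (Fin n) (Fin n) ℝ := 1 + c • J + d • U with hN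
  have hcα : (1 - α) * c = α / n := by
    rw [hc]; field_simp
  have hdα : (1 - α * β) * d = α * β := by
    rw [hd]; field_simp
  have hcαn : (1 - α) * c * n = α := by
    rw [hc]; field_simp
  clear_value c d
  clear hc hd
  have key : (1 - α • Pbar) * N = 1 := by
    rw [hPbar, hN]
    rw [smul_add, smul_smul, smul_smul]
    simp only [sub_mul, mul_add, add_mul, one_mul, mul_one, Matrix.smul_mul, Matrix.mul_smul,
      hJJ, hJU, hUJ, hUU, smul_zero, add_zero, zero_add, smul_smul]
    match_scalars
    · ring
    · field_simp
      linear_combination hcαn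
    · linear_combination hdα
  have hUnit : IsUnit (1 - α • Pbar) := by
    rw [Matrix.isUnit_iff_isUnit_det]
    have hdet := congrArg Matrix.det key
    rw [Matrix.det_mul, Matrix.det_one] at hdet
    exact IsUnit.of_mul_eq_one _ hdet
  have hinv : (1 - α • Pbar)⁻¹ = N := Matrix.inv_eq_right_inv key
  refine ⟨hUnit, ?_⟩
  rw [hinv, hN]
  have hJv : J *ᵥ v = fun _ => (1 : ℝ) := by
    funext i
    simp [hJ, Matrix.mulVec, dotProduct, Matrix.vecMulVec_apply, hv]
  have hUv : U *ᵥ v = (∑ i, u i * v i) • u := by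
    funext i
    simp only [hU, Matrix.mulVec, dotProduct, Matrix.vecMulVec_apply, Pi.smul_apply,
      smul_eq_mul]
    rw [Finset.sum_mul]
    exact Finset.sum_congr rfl fun x _ => by ring
  rw [Matrix.add_mulVec, Matrix.add_mulVec, Matrix.one_mulVec, Matrix.smul_mulVec,
    Matrix.smul_mulVec, hJv, hUv]
  funext i
  simp only [Pi.add_apply, Pi.smul_apply, smul_eq_mul]
  linear_combination hcα
end
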